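/- arXiv:1802.08070 — 8 statements merged into one kernel-verified Lean document; each statement's English description precedes it below -/
import Mathlib

section
/- Let T be a monad on a category C and H an endofunctor on C that preserves non-empty monomorphisms (monos whose domain is not a strict initial object). Then every lifting H^T of H to the Eilenberg-Moore category C^T preserves non-empty monomorphisms. -/
open CategoryTheory CategoryTheory.Limits

universe v u

namespace LFF

variable {C : Type u} [Category.{v} C]

/-- An object is finitely presentable if its hom-functor preserves filtered colimits. -/
def IsFP (X : C) : Prop :=
  ∀ (J : Type v) [SmallCategory J] [IsFiltered J] (F : J ⥤ C)
    (c : Cocone F), Nonempty (IsColimit c) →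
    Nonempty (IsColimit ((coyoneda.obj (Opposite.op X)).mapCocone c))

/-- An object is finitely generated if its hom-functor preserves filtered colimits
of diagrams all of whose connecting morphisms are monomorphisms. -/
def IsFG (X : C) : Prop :=
  ∀ (J : Type v) [SmallCategory J] [IsFiltered J] (F : J ⥤ C),
    (∀ ⦃i j : J⦄ (f : i ⟶ j), Mono (F.map f)) →
    ∀ (c : Cocone F), Nonempty (IsColimit c) →
    Nonempty (IsColimit ((coyoneda.obj (Opposite.op X)).mapCocone c))

/-- A category is locally finitely presentable if it is cocomplete, the finitely
presentable objects are essentially small, and every object is a filtered colimit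
of finitely presentable objects. -/
def IsLFP (C : Type u) [Category.{v} C] : Prop :=
  HasColimits C ∧
  EssentiallySmall.{v} (ObjectProperty.FullSubcategory (fun X : C => IsFP X)) ∧
  ∀ X : C, ∃ (J : Type v) (_ : SmallCategory J) (_ : IsFiltered J)
    (F : J ⥤ C) (c : Cocone F),
      (∀ j, IsFP (F.obj j)) ∧ Nonempty (IsColimit c) ∧ Nonempty (c.pt ≅ X)

/-- A functor is finitary if it preserves filtered colimits. -/
def IsFinitary (H : C ⥤ C) : Prop :=
  ∀ (J : Type v) [SmallCategory J] [IsFiltered J], Nonempty (PreservesColimitsOfShape J H)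

/-- An object is a strict initial object if it is initial and every morphism into it
is an isomorphism. -/
def IsStrictInitial (X : C) : Prop :=
  Nonempty (IsInitial X) ∧ ∀ (Y : C) (f : Y ⟶ X), IsIso f

/-- A monomorphism is non-empty if its domain is not a strict initial object;
a functor preserves non-empty monos if it maps them to monos. -/
def PreservesNonemptyMonos (H : C ⥤ C) : Prop :=
  ∀ ⦃X Y : C⦄ (m : X ⟶ Y), Mono m → ¬ IsStrictInitial X → Mono (H.map m)

/-- A coalgebra is locally finitely generated (lfg) if every morphism from a finitely
generated object into its carrier factors through a coalgebra homomorphism from a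
coalgebra with finitely generated carrier. -/
def IsLFGCoalgebra (H : C ⥤ C) (X : Endofunctor.Coalgebra H) : Prop :=
  ∀ (S : C), IsFG S → ∀ f : S ⟶ X.V,
    ∃ (P : Endofunctor.Coalgebra H) (h : P ⟶ X) (f' : S ⟶ P.V),
      IsFG P.V ∧ f' ≫ h.f = f

/-- An algebra is fg-iterative if every flat equation morphism `e : X ⟶ HX + A` with
`X` finitely generated has a unique solution. -/
def IsFGIterative [HasBinaryCoproducts C] (H : C ⥤ C) (A : Endofunctor.Algebra H) : Prop :=
  ∀ (X : C), IsFG X → ∀ e : X ⟶ (H.obj X ⨿ A.a),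
    ∃! s : X ⟶ A.a,
      s = e ≫ coprod.map (H.map s) (𝟙 A.a) ≫ coprod.desc A.str (𝟙 A.a)

end LFF

open LFF in
/-- Any lifting of a functor preserving non-empty monos to the Eilenberg-Moore category
preserves non-empty monos. -/
theorem stmt2 {C : Type u} [Category.{v} C] (T : Monad C) (H : C ⥤ C)
    (hH : PreservesNonemptyMonos H) (Hl : T.Algebra ⥤ T.Algebra)
    (hlift : Hl ⋙ T.forget = T.forget ⋙ H) :
    PreservesNonemptyMonos Hl := by
  intro X Y m hm hX
  -- domain not strict initial in C
  have hXA : ¬ IsStrictInitial X.A := by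
    intro ⟨⟨hI⟩, hs⟩
    apply hX
    constructor
    · -- X is initial in T.Algebra
      have hTX : IsInitial ((T : C ⥤ C).obj X.A) := by
        have : IsIso X.a := hs _ X.a
        exact hI.ofIso (asIso X.a).symm
      refine ⟨IsInitial.ofUniqueHom (fun B => ⟨hI.to B.A, hTX.hom_ext _ _⟩) ?_⟩
      intro B g
      apply Monad.Algebra.Hom.ext
      exact hI.hom_ext _ _
    · intro B g
      have : IsIso ((Monad.forget T).map g) := hs _ g.f
      exact isIso_of_reflects_iso g (Monad.forget T)
  have hmf : Mono m.f := show Mono ((Monad.forget T).map m) from inferInstance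
  have hHm : Mono (H.map m.f) := hH m.f hmf hXA
  -- transport along hlift
  have key : Mono ((Monad.forget T).map (Hl.map m)) := by
    have := Functor.congr_hom hlift m
    simp only [Functor.comp_map] at this
    rw [this]
    have hHm' : Mono (H.map ((Monad.forget T).map m)) := hHm
    have h1 : Mono (H.map ((Monad.forget T).map m) ≫ eqToHom (Functor.congr_obj hlift Y).symm) :=
      mono_comp _ _
    exact mono_comp _ _
  exact (Monad.forget T).mono_of_mono_map key
end

section
/- If a monad algebra (A, a : TA → A) for a monad T has carrier A that is a strict initial object of C, then (A, a) is a strict initial object of the Eilenberg-Moore category C^T. -/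
open CategoryTheory CategoryTheory.Limits

universe v u

open LFF in
/-- If the carrier of a monad algebra is a strict initial object of `C`, then the
algebra is a strict initial object of the Eilenberg-Moore category. -/
theorem stmt3 {C : Type u} [Category.{v} C] (T : Monad C) (A : T.Algebra)
    (h : IsStrictInitial A.A) :
    IsStrictInitial (C := T.Algebra) A := by
  obtain ⟨⟨hI⟩, hstrict⟩ := h
  have haiso : IsIso A.a := hstrict _ A.a
  have hTA : IsInitial (T.obj A.A) := hI.ofIso (asIso A.a).symm
  constructor
  · refine ⟨IsInitial.ofUniqueHom (fun B => ⟨hI.to B.A, hTA.hom_ext _ _⟩) ?_⟩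
    intro B m
    apply CategoryTheory.Monad.Algebra.Hom.ext
    exact hI.hom_ext _ _
  · intro B f
    have : IsIso f.f := hstrict _ f.f
    exact (haveI : IsIso ((Monad.forget T).map f) := this; isIso_of_reflects_iso f (Monad.forget T))
end

section
/- Let C be a category with (strong epi, mono)-factorizations and H : C → C an endofunctor preserving non-empty monomorphisms. Then every coalgebra homomorphism h : (C,c) → (D,d) factors in Coalg H as a strong-epi-carried homomorphism followed by a mono-carried homomorphism; i.e., the image object I of h in C carries a unique coalgebra structure making both parts of the factorization into coalgebra homomorphisms. -/
open CategoryTheory CategoryTheory.Limits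

universe v u

open LFF in
/-- (Strong epi, mono)-factorizations lift from `C` to coalgebras: every coalgebra
homomorphism factors as a strong-epi-carried homomorphism followed by a mono-carried one,
via a unique coalgebra structure on the image. -/
theorem stmt4 {C : Type u} [Category.{v} C] [HasStrongEpiMonoFactorisations C]
    (H : C ⥤ C) (hH : PreservesNonemptyMonos H)
    (A B : Endofunctor.Coalgebra H) (h : A ⟶ B) :
    ∃ (I : C) (e : A.V ⟶ I) (m : I ⟶ B.V), StrongEpi e ∧ Mono m ∧ e ≫ m = h.f ∧
      ∃! i : I ⟶ H.obj I,
        A.str ≫ H.map e = e ≫ i ∧ i ≫ H.map m = m ≫ B.str := by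
  obtain ⟨F⟩ := HasStrongEpiMonoFactorisations.has_fac h.f
  haveI := F.m_mono
  haveI := F.e_strong_epi
  refine ⟨F.I, F.e, F.m, F.e_strong_epi, F.m_mono, F.fac, ?_⟩
  have hsq : (A.str ≫ H.map F.e) ≫ H.map F.m = F.e ≫ (F.m ≫ B.str) := by
    rw [Category.assoc, ← H.map_comp, F.fac, h.h, ← Category.assoc, F.fac]
  by_cases hI : IsStrictInitial F.I
  · haveI : IsIso F.e := hI.2 _ F.e
    refine ⟨inv F.e ≫ A.str ≫ H.map F.e, ⟨by simp, ?_⟩, ?_⟩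
    · rw [Category.assoc, Category.assoc, ← H.map_comp, F.fac, h.h]
      simp only [← F.fac, Category.assoc, IsIso.inv_hom_id_assoc]
    · intro i hi
      have := hi.1
      rw [← cancel_epi F.e, ← this]
      simp
  · haveI : Mono (H.map F.m) := hH F.m F.m_mono hI
    have sq : CommSq (A.str ≫ H.map F.e) F.e (H.map F.m) (F.m ≫ B.str) := ⟨hsq⟩
    refine ⟨sq.lift, ⟨sq.fac_left.symm, sq.fac_right⟩, ?_⟩
    intro i hi
    rw [← cancel_epi F.e, ← hi.1, sq.fac_left]
end

section
/- A coalgebra (X, x : X → HX) is lfg if and only if for every finitely generated subobject f : S ↣ X there exist a mono-carried subcoalgebra h : (P,p) ↣ (X,x) with P finitely generated and a monomorphism f' : S ↣ P such that h ∘ f' = f. -/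
open CategoryTheory CategoryTheory.Limits

universe v u

open LFF
namespace Stmt7Aux


variable {C : Type u} [Category.{v} C]

/-- Factor a morphism out of `T` through a colimit, given that the coyoneda-mapped
cocone is colimiting. -/
lemma factors_of_isColimit_map {T : C} {J : Type v} [SmallCategory J] {F : J ⥤ C}
    {c : Cocone F} (h : IsColimit ((coyoneda.obj (Opposite.op T)).mapCocone c))
    (u : T ⟶ c.pt) : ∃ (j : J) (t : T ⟶ F.obj j), t ≫ c.ι.app j = u := by
  obtain ⟨j, y, hy⟩ := Types.jointly_surjective _ h u
  exact ⟨j, y, hy⟩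

lemma eq_of_isColimit_map {T : C} {J : Type v} [SmallCategory J] [IsFiltered J] {F : J ⥤ C}
    {c : Cocone F} (h : IsColimit ((coyoneda.obj (Opposite.op T)).mapCocone c))
    {i j : J} (ti : T ⟶ F.obj i) (tj : T ⟶ F.obj j)
    (hyp : ti ≫ c.ι.app i = tj ≫ c.ι.app j) :
    ∃ (k : J) (α : i ⟶ k) (β : j ⟶ k), ti ≫ F.map α = tj ≫ F.map β := by
  have := (Types.FilteredColimit.isColimit_eq_iff
    (F ⋙ coyoneda.obj (Opposite.op T)) h (xi := ti) (xj := tj)).1 hyp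
  obtain ⟨k, α, β, hk⟩ := this
  exact ⟨k, α, β, hk⟩

/-- fp objects are a generator: a criterion for monomorphisms. -/
lemma mono_of_fp
    (pres : ∀ X : C, ∃ (J : Type v) (_ : SmallCategory J) (_ : IsFiltered J)
      (F : J ⥤ C) (c : Cocone F),
        (∀ j, LFF.IsFP (F.obj j)) ∧ Nonempty (IsColimit c) ∧ Nonempty (c.pt ≅ X))
    {U V : C} (w : U ⟶ V)
    (hw : ∀ (T : C), LFF.IsFP T → ∀ a b : T ⟶ U, a ≫ w = b ≫ w → a = b) : Mono w := by
  constructor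
  intro Y u v huv
  obtain ⟨J, _, _, F, c, hfp, ⟨hc⟩, ⟨iso⟩⟩ := pres Y
  have key : ∀ j : J, c.ι.app j ≫ (iso.hom ≫ u) = c.ι.app j ≫ (iso.hom ≫ v) := by
    intro j
    have := hw (F.obj j) (hfp j) (c.ι.app j ≫ iso.hom ≫ u) (c.ι.app j ≫ iso.hom ≫ v)
      (by simp only [Category.assoc, huv])
    simpa [Category.assoc] using this
  have : iso.hom ≫ u = iso.hom ≫ v := hc.hom_ext key
  exact (cancel_epi iso.hom).1 this

/-- Colimit injections of filtered diagrams of monos are mono. -/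
lemma mono_cι
    (pres : ∀ X : C, ∃ (J : Type v) (_ : SmallCategory J) (_ : IsFiltered J)
      (F : J ⥤ C) (c : Cocone F),
        (∀ j, LFF.IsFP (F.obj j)) ∧ Nonempty (IsColimit c) ∧ Nonempty (c.pt ≅ X))
    {J : Type v} [SmallCategory J] [IsFiltered J] {G : J ⥤ C}
    (hG : ∀ ⦃i j : J⦄ (f : i ⟶ j), Mono (G.map f)) {c : Cocone G} (hc : IsColimit c)
    (j : J) : Mono (c.ι.app j) := by
  apply mono_of_fp pres
  intro T hT a b hab
  obtain ⟨hmap⟩ := hT J G c ⟨hc⟩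
  obtain ⟨k, α, β, hk⟩ := eq_of_isColimit_map hmap a b hab
  obtain ⟨k', δ, hδ⟩ : ∃ (k' : J) (δ : k ⟶ k'), α ≫ δ = β ≫ δ :=
    ⟨IsFiltered.coeq α β, IsFiltered.coeqHom α β, IsFiltered.coeq_condition α β⟩
  have : a ≫ G.map (α ≫ δ) = b ≫ G.map (β ≫ δ) := by
    simp only [Functor.map_comp, ← Category.assoc, hk]
  rw [hδ] at this
  have := (cancel_mono (G.map (β ≫ δ))).1 this
  exact this



/-- Data for one step of the iterated-coequalizer construction. -/
structure StepData {B M₀ : C} (m₀ : M₀ ⟶ B) where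
  M₁ : C
  q : M₀ ⟶ M₁
  m₁ : M₁ ⟶ B
  fac : q ≫ m₁ = m₀
  strong : StrongEpi q
  coeq : ∀ ⦃T : C⦄, IsFP T → ∀ (a b : T ⟶ M₀), a ≫ m₀ = b ≫ m₀ → a ≫ q = b ≫ q

noncomputable def mkStep [HasColimits C]
    (hsm : EssentiallySmall.{v} (ObjectProperty.FullSubcategory (fun X : C => IsFP X)))
    {B M₀ : C} (m₀ : M₀ ⟶ B) : StepData m₀ := by
  haveI := hsm
  let Sk := SmallModel (ObjectProperty.FullSubcategory (fun X : C => IsFP X))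
  let ε := equivSmallModel (ObjectProperty.FullSubcategory (fun X : C => IsFP X))
  let ι : Sk ⥤ C := ε.inverse ⋙ ObjectProperty.ι _
  let K := {p : Σ (s : Sk), (ι.obj s ⟶ M₀) × (ι.obj s ⟶ M₀) // p.2.1 ≫ m₀ = p.2.2 ≫ m₀}
  let F₁ : (∐ fun k : K => ι.obj k.1.1) ⟶ M₀ := Sigma.desc fun k => k.1.2.1
  let F₂ : (∐ fun k : K => ι.obj k.1.1) ⟶ M₀ := Sigma.desc fun k => k.1.2.2
  have hcond : F₁ ≫ m₀ = F₂ ≫ m₀ := by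
    apply Sigma.hom_ext
    intro k
    simp only [F₁, F₂, colimit.ι_desc_assoc, Discrete.functor_obj, Cofan.mk_ι_app]
    exact k.2
  refine ⟨coequalizer F₁ F₂, coequalizer.π F₁ F₂, coequalizer.desc m₀ hcond,
    coequalizer.π_desc _ _, inferInstance, ?_⟩
  intro T hT a b hab
  -- transport T to the skeleton
  obtain ⟨s, ⟨φ⟩⟩ : ∃ s : Sk, Nonempty (ι.obj s ≅ T) := by
    refine ⟨ε.functor.obj ⟨T, hT⟩, ⟨(ObjectProperty.ι _).mapIso
      (ε.unitIso.symm.app ⟨T, hT⟩)⟩⟩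
  have hk : (φ.hom ≫ a) ≫ m₀ = (φ.hom ≫ b) ≫ m₀ := by
    simp only [Category.assoc, hab]
  let k : K := ⟨⟨s, φ.hom ≫ a, φ.hom ≫ b⟩, hk⟩
  have h1 : Sigma.ι (fun k : K => ι.obj k.1.1) k ≫ F₁ = φ.hom ≫ a := by
    simp [F₁, k]
  have h2 : Sigma.ι (fun k : K => ι.obj k.1.1) k ≫ F₂ = φ.hom ≫ b := by
    simp [F₂, k]
  have := coequalizer.condition F₁ F₂
  have hc : (φ.hom ≫ a) ≫ coequalizer.π F₁ F₂ = (φ.hom ≫ b) ≫ coequalizer.π F₁ F₂ := by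
    rw [← h1, ← h2, Category.assoc, Category.assoc, this]
  have := (cancel_epi φ.hom).1 (by simpa [Category.assoc] using hc)
  exact this



lemma hasShapeNat [HasColimits C] : HasColimitsOfShape ℕ C :=
  hasColimitsOfShape_of_equivalence (ULiftHomULiftCategory.equiv.{v, v} ℕ).symm

/-- `T` finitely presentable: maps into an `ℕ`-chain colimit factor through a stage. -/
lemma fp_factor_chain {T : C} (hT : IsFP T) {F : ℕ ⥤ C} {c : Cocone F} (hc : IsColimit c)
    (u : T ⟶ c.pt) : ∃ (n : ℕ) (t : T ⟶ F.obj n), t ≫ c.ι.app n = u := by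
  let E := (ULiftHomULiftCategory.equiv.{v, v} ℕ).symm
  have hw : IsColimit (c.whisker E.functor) := hc.whiskerEquivalence E
  obtain ⟨hmap⟩ := hT _ (E.functor ⋙ F) (c.whisker E.functor) ⟨hw⟩
  obtain ⟨j, t, ht⟩ := factors_of_isColimit_map hmap u
  exact ⟨E.functor.obj j, t, ht⟩

section Chain

variable [HasColimits C]
  (hsm : EssentiallySmall.{v} (ObjectProperty.FullSubcategory (fun X : C => IsFP X)))
  {A B : C} (g : A ⟶ B)

/-- The chain of iterated multi-coequalizers. -/
noncomputable def chainAux : ℕ → Σ' (M : C), M ⟶ B := fun n =>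
  Nat.rec ⟨A, g⟩ (fun _ p => ⟨(mkStep hsm p.2).M₁, (mkStep hsm p.2).m₁⟩) n

noncomputable def chainQ (n : ℕ) : (chainAux hsm g n).1 ⟶ (chainAux hsm g (n + 1)).1 :=
  (mkStep hsm (chainAux hsm g n).2).q

lemma chain_fac (n : ℕ) :
    chainQ hsm g n ≫ (chainAux hsm g (n + 1)).2 = (chainAux hsm g n).2 :=
  (mkStep hsm (chainAux hsm g n).2).fac

lemma chain_strong (n : ℕ) : StrongEpi (chainQ hsm g n) :=
  (mkStep hsm (chainAux hsm g n).2).strong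

lemma chain_coeq (n : ℕ) {T : C} (hT : IsFP T) (a b : T ⟶ (chainAux hsm g n).1)
    (h : a ≫ (chainAux hsm g n).2 = b ≫ (chainAux hsm g n).2) :
    a ≫ chainQ hsm g n = b ≫ chainQ hsm g n :=
  (mkStep hsm (chainAux hsm g n).2).coeq hT a b h

noncomputable def chainF : ℕ ⥤ C := Functor.ofSequence (chainQ hsm g)

noncomputable def coconeB : Cocone (chainF hsm g) where
  pt := B
  ι := NatTrans.ofSequence (F := chainF hsm g) (G := (Functor.const ℕ).obj B)
    (fun n => (chainAux hsm g n).2) (by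
      intro n
      have h1 : (chainF hsm g).map (homOfLE (n.le_add_right 1)) = chainQ hsm g n :=
        Functor.ofSequence_map_homOfLE_succ _ n
      rw [h1]
      exact (chain_fac hsm g n).trans (Category.comp_id _).symm)

end Chain

/-- Key factorization lemma: every morphism with finitely generated domain factors
as an epi with lifting property against monos, followed by a mono with finitely
generated domain. -/
lemma exists_fact [HasColimits C]
    (hsm : EssentiallySmall.{v} (ObjectProperty.FullSubcategory (fun X : C => IsFP X)))
    (pres : ∀ X : C, ∃ (J : Type v) (_ : SmallCategory J) (_ : IsFiltered J)
      (F : J ⥤ C) (c : Cocone F),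
        (∀ j, IsFP (F.obj j)) ∧ Nonempty (IsColimit c) ∧ Nonempty (c.pt ≅ X))
    {A B : C} (g : A ⟶ B) (hA : IsFG A) :
    ∃ (M : C) (e : A ⟶ M) (m : M ⟶ B), e ≫ m = g ∧ Mono m ∧ IsFG M ∧ Epi e ∧
      ∀ {U W : C} (α : A ⟶ U) (n : U ⟶ W) (β : M ⟶ W), Mono n →
        e ≫ β = α ≫ n → ∃ d : M ⟶ U, e ≫ d = α ∧ d ≫ n = β := by
  haveI : HasColimitsOfShape ℕ C := hasShapeNat
  let F := chainF hsm g
  let Mω := colimit F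
  let inj : ∀ n : ℕ, F.obj n ⟶ Mω := fun n => colimit.ι F n
  let e : A ⟶ Mω := inj 0
  let m : Mω ⟶ B := colimit.desc F (coconeB hsm g)
  have hinjm : ∀ n, inj n ≫ m = (chainAux hsm g n).2 := fun n => colimit.ι_desc _ _
  have hwle : ∀ {i j : ℕ} (hij : i ≤ j), F.map (homOfLE hij) ≫ inj j = inj i :=
    fun {i j} hij => colimit.w F (homOfLE hij)
  have hqinj : ∀ n, chainQ hsm g n ≫ inj (n + 1) = inj n := by
    intro n
    have h1 : F.map (homOfLE (n.le_add_right 1)) = chainQ hsm g n :=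
      Functor.ofSequence_map_homOfLE_succ _ n
    rw [← h1]
    exact hwle _
  -- e is an epimorphism
  have epi_e : Epi e := by
    constructor
    intro W u v huv
    apply colimit.hom_ext
    intro n
    induction n with
    | zero => exact huv
    | succ k ih =>
      haveI : Epi (chainQ hsm g k) := (chain_strong hsm g k).epi
      have : chainQ hsm g k ≫ inj (k + 1) ≫ u = chainQ hsm g k ≫ inj (k + 1) ≫ v := by
        erw [← Category.assoc, ← Category.assoc, hqinj k]
        exact ih
      exact (cancel_epi (chainQ hsm g k)).1 this
  -- the lifting property of e against monomorphisms
  have lift_e : ∀ {U W : C} (α : A ⟶ U) (nn : U ⟶ W) (β : Mω ⟶ W), Mono nn →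
      e ≫ β = α ≫ nn → ∃ d : Mω ⟶ U, e ≫ d = α ∧ d ≫ nn = β := by
    intro U W α nn β hmono hsq
    haveI := hmono
    have hstep : ∀ (k : ℕ) (d : F.obj k ⟶ U), d ≫ nn = inj k ≫ β →
        ∃ d' : F.obj (k + 1) ⟶ U, chainQ hsm g k ≫ d' = d ∧ d' ≫ nn = inj (k + 1) ≫ β := by
      intro k d hd
      haveI : HasLiftingProperty (chainQ hsm g k) nn := (chain_strong hsm g k).llp nn
      have sq : CommSq d (chainQ hsm g k) nn (inj (k + 1) ≫ β) :=
        ⟨by erw [hd, ← hqinj k, Category.assoc]⟩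
      haveI : sq.HasLift := ((chain_strong hsm g k).llp nn).sq_hasLift sq
      exact ⟨sq.lift, sq.fac_left, sq.fac_right⟩
    let D : ∀ k : ℕ, {d : F.obj k ⟶ U // d ≫ nn = inj k ≫ β} := fun k =>
      Nat.rec ⟨α, hsq.symm⟩
        (fun k dk => ⟨(hstep k dk.1 dk.2).choose, (hstep k dk.1 dk.2).choose_spec.2⟩) k
    have hcomp : ∀ k, chainQ hsm g k ≫ (D (k + 1)).1 = (D k).1 := fun k =>
      (hstep k (D k).1 (D k).2).choose_spec.1
    let coconeU : Cocone F :=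
      { pt := U
        ι := NatTrans.ofSequence (F := F) (G := (Functor.const ℕ).obj U)
          (fun k => (D k).1) (by
            intro n
            have h1 : F.map (homOfLE (n.le_add_right 1)) = chainQ hsm g n :=
              Functor.ofSequence_map_homOfLE_succ _ n
            rw [h1]
            exact (hcomp n).trans (Category.comp_id _).symm) }
    refine ⟨colimit.desc F coconeU, ?_, ?_⟩
    · exact colimit.ι_desc coconeU 0
    · apply colimit.hom_ext
      intro k
      rw [← Category.assoc]
      have h1 : inj k ≫ colimit.desc F coconeU = (D k).1 := colimit.ι_desc coconeU k
      rw [h1, (D k).2]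
  -- m is a monomorphism
  have mono_m : Mono m := by
    apply mono_of_fp pres
    intro T hT a b hab
    obtain ⟨n₁, a₀, ha₀⟩ := fp_factor_chain hT (colimit.isColimit F) a
    obtain ⟨n₂, b₀, hb₀⟩ := fp_factor_chain hT (colimit.isColimit F) b
    replace ha₀ : a₀ ≫ inj n₁ = a := ha₀
    replace hb₀ : b₀ ≫ inj n₂ = b := hb₀
    obtain ⟨n, hn1, hn2⟩ : ∃ n : ℕ, n₁ ≤ n ∧ n₂ ≤ n :=
      ⟨max n₁ n₂, le_max_left _ _, le_max_right _ _⟩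
    have ha₁ : (a₀ ≫ F.map (homOfLE hn1)) ≫ inj n = a := by
      rw [Category.assoc, hwle hn1]; exact ha₀
    have hb₁ : (b₀ ≫ F.map (homOfLE hn2)) ≫ inj n = b := by
      rw [Category.assoc, hwle hn2]; exact hb₀
    have hstage : (a₀ ≫ F.map (homOfLE hn1)) ≫ (chainAux hsm g n).2
        = (b₀ ≫ F.map (homOfLE hn2)) ≫ (chainAux hsm g n).2 := by
      rw [← hinjm n, ← Category.assoc, ← Category.assoc, ha₁, hb₁]
      exact hab
    have hcoeq := chain_coeq hsm g n hT _ _ hstage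
    have hfin : ((a₀ ≫ F.map (homOfLE hn1)) ≫ chainQ hsm g n) ≫ inj (n + 1)
        = ((b₀ ≫ F.map (homOfLE hn2)) ≫ chainQ hsm g n) ≫ inj (n + 1) := by erw [hcoeq]; rfl
    erw [Category.assoc (a₀ ≫ F.map (homOfLE hn1)), Category.assoc (b₀ ≫ F.map (homOfLE hn2)),
      hqinj n, ha₁, hb₁] at hfin
    exact hfin
  -- Mω is finitely generated
  have isfg : IsFG Mω := by
    intro J _ _ G hG c ⟨hc⟩
    constructor
    apply Types.FilteredColimit.isColimitOf
    · -- joint surjectivity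
      intro u
      obtain ⟨hmapA⟩ := hA J G hG c ⟨hc⟩
      obtain ⟨j, t, ht⟩ := factors_of_isColimit_map hmapA (e ≫ u)
      haveI : Mono (c.ι.app j) := mono_cι pres hG hc j
      obtain ⟨d, _, hd2⟩ := lift_e t (c.ι.app j) u inferInstance ht.symm
      exact ⟨j, d, hd2.symm⟩
    · -- equalization at a finite stage
      intro i j xi xj hx
      obtain ⟨hmapA⟩ := hA J G hG c ⟨hc⟩
      replace hx : xi ≫ c.ι.app i = xj ≫ c.ι.app j := hx
      have hd : xi ≫ G.map (IsFiltered.leftToMax i j) ≫ c.ι.app (IsFiltered.max i j)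
          = xj ≫ G.map (IsFiltered.rightToMax i j) ≫ c.ι.app (IsFiltered.max i j) := by
        rw [Cocone.w, Cocone.w]
        exact hx
      obtain ⟨k', γ₁, γ₂, hγ⟩ := eq_of_isColimit_map hmapA
        (e ≫ (xi ≫ G.map (IsFiltered.leftToMax i j)))
        (e ≫ (xj ≫ G.map (IsFiltered.rightToMax i j)))
        (by simp only [Category.assoc]; rw [hd])
      refine ⟨k', IsFiltered.leftToMax i j ≫ γ₁, IsFiltered.rightToMax i j ≫ γ₂, ?_⟩
      have h3 : e ≫ (xi ≫ G.map (IsFiltered.leftToMax i j) ≫ G.map γ₁)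
          = e ≫ (xj ≫ G.map (IsFiltered.rightToMax i j) ≫ G.map γ₂) := by
        simpa only [Category.assoc] using hγ
      have h2 := (cancel_epi e).1 h3
      show xi ≫ G.map (IsFiltered.leftToMax i j ≫ γ₁)
          = xj ≫ G.map (IsFiltered.rightToMax i j ≫ γ₂)
      simpa only [Functor.map_comp, Category.assoc] using h2
  refine ⟨Mω, e, m, ?_, mono_m, isfg, epi_e, fun α nn β h1 h2 => lift_e α nn β h1 h2⟩
  erw [hinjm 0]
  rfl

end Stmt7Aux

open Stmt7Aux

open LFF in
/-- A coalgebra is lfg iff every finitely generated subobject of its carrier factors,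
via a monomorphism, through a mono-carried subcoalgebra with finitely generated carrier. -/
theorem stmt7 {C : Type u} [Category.{v} C] (hC : IsLFP C)
    (H : C ⥤ C) (hfin : IsFinitary H) (hm : PreservesNonemptyMonos H)
    (X : Endofunctor.Coalgebra H) :
    IsLFGCoalgebra H X ↔
      ∀ (S : C), IsFG S → ∀ f : S ⟶ X.V, Mono f →
        ∃ (P : Endofunctor.Coalgebra H) (h : P ⟶ X) (f' : S ⟶ P.V),
          IsFG P.V ∧ Mono h.f ∧ Mono f' ∧ f' ≫ h.f = f := by
  obtain ⟨hcol, hsm, pres⟩ := hC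
  haveI := hcol
  constructor
  · -- forward direction
    intro hlfg S hS f hf
    obtain ⟨P₁, h₁, f₁, hfgP₁, hfac₁⟩ := hlfg S hS f
    obtain ⟨M, e, m, hfacm, hmono, hfgM, hepi, hlift⟩ := exists_fact hsm pres h₁.f hfgP₁
    have h5 : (f₁ ≫ e) ≫ m = f := by
      rw [Category.assoc, hfacm]; exact hfac₁
    by_cases hstrict : IsStrictInitial M
    · -- then S itself is strict initial; it carries a coalgebra structure
      haveI hiso : IsIso (f₁ ≫ e) := hstrict.2 _ _
      have hSstrict : IsStrictInitial S := by
        refine ⟨⟨hstrict.1.some.ofIso (asIso (f₁ ≫ e)).symm⟩, ?_⟩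
        intro Y k
        haveI : IsIso (k ≫ (f₁ ≫ e)) := hstrict.2 _ _
        exact IsIso.of_isIso_comp_right k (f₁ ≫ e)
      obtain ⟨⟨hin⟩, -⟩ := hSstrict
      exact ⟨⟨S, hin.to _⟩, ⟨f, hin.hom_ext _ _⟩, 𝟙 S, hS, hf, inferInstance,
        Category.id_comp f⟩
    · -- lift the coalgebra structure onto M along the strong epi e
      have hHm : Mono (H.map m) := hm m hmono hstrict
      have hsq : e ≫ (m ≫ X.str) = (P₁.str ≫ H.map e) ≫ H.map m := by
        calc e ≫ m ≫ X.str = (e ≫ m) ≫ X.str := by rw [Category.assoc]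
          _ = h₁.f ≫ X.str := by rw [hfacm]
          _ = P₁.str ≫ H.map h₁.f := h₁.h.symm
          _ = P₁.str ≫ H.map (e ≫ m) := by rw [hfacm]
          _ = (P₁.str ≫ H.map e) ≫ H.map m := by rw [H.map_comp, Category.assoc]
      obtain ⟨w, hw1, hw2⟩ := hlift (P₁.str ≫ H.map e) (H.map m) (m ≫ X.str) hHm hsq
      haveI : Mono ((f₁ ≫ e) ≫ m) := by rw [h5]; exact hf
      have hmono' : Mono (f₁ ≫ e) := mono_of_mono (f₁ ≫ e) m
      exact ⟨⟨M, w⟩, ⟨m, hw2⟩, f₁ ≫ e, hfgM, hmono, hmono', h5⟩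
  · -- backward direction
    intro hsub S hS f
    obtain ⟨M, e, m, hfacm, hmono, hfgM, -, -⟩ := exists_fact hsm pres f hS
    obtain ⟨P, h, f', hfgP, -, -, hfac⟩ := hsub M hfgM m hmono
    exact ⟨P, h, e ≫ f', hfgP, by rw [Category.assoc, hfac]; exact hfacm⟩
end

section
/- Every filtered colimit in Coalg H of coalgebras with finitely generated carrier is a locally finitely generated coalgebra. -/
open CategoryTheory CategoryTheory.Limits

universe v u

namespace Stmt8Aux
open LFF

/-- A `Type v` copy of the poset `ℕ`, used as a filtered index category. -/
structure IxN : Type v where n : ℕ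

instance : Preorder IxN.{v} where
  le a b := a.n ≤ b.n
  le_refl _ := Nat.le_refl _
  le_trans _ _ _ := Nat.le_trans

instance : Nonempty IxN.{v} := ⟨⟨0⟩⟩

instance : IsDirected IxN.{v} (· ≤ ·) :=
  ⟨fun a b => ⟨⟨max a.n b.n⟩, Nat.le_max_left a.n b.n, Nat.le_max_right a.n b.n⟩⟩

variable {C : Type u} [Category.{v} C]

section Coyo
variable {J : Type v} [SmallCategory J] {F : J ⥤ C} {t : Cocone F} {T : C}

lemma factors_of_coyoneda (h : IsColimit ((coyoneda.obj (Opposite.op T)).mapCocone t))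
    (g : T ⟶ t.pt) : ∃ (j : J) (w : T ⟶ F.obj j), w ≫ t.ι.app j = g := by
  obtain ⟨j, y, hy⟩ := Types.jointly_surjective _ h g
  exact ⟨j, y, hy⟩

lemma merge_of_coyoneda [IsFiltered J]
    (h : IsColimit ((coyoneda.obj (Opposite.op T)).mapCocone t))
    {j j' : J} (u : T ⟶ F.obj j) (v : T ⟶ F.obj j')
    (huv : u ≫ t.ι.app j = v ≫ t.ι.app j') :
    ∃ (k : J) (f : j ⟶ k) (g : j' ⟶ k), u ≫ F.map f = v ≫ F.map g := by
  have := (Types.FilteredColimit.isColimit_eq_iff _ h (i := j) (j := j') (xi := u) (xj := v)).mp huv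
  exact this

/-- jointly epi: morphisms out of any object are determined by precomposition with
maps from finitely presentable objects. -/
lemma jointly_epi_fp (hC : IsLFP C) {Y Z : C} (g g' : Y ⟶ Z)
    (h : ∀ (T : C), IsFP T → ∀ a : T ⟶ Y, a ≫ g = a ≫ g') : g = g' := by
  obtain ⟨J₀, _, _, F₀, c₀, hfp, ⟨hcol⟩, ⟨e⟩⟩ := hC.2.2 Y
  have : e.hom ≫ g = e.hom ≫ g' := by
    apply hcol.hom_ext
    intro j
    simpa using h _ (hfp j) (c₀.ι.app j ≫ e.hom)
  simpa using (cancel_epi e.hom).mp (by simpa using this)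

end Coyo

/-- Colimit injections of a filtered colimit over a diagram of monos are mono. -/
lemma mono_ι (hC : IsLFP C) {J : Type v} [SmallCategory J] [IsFiltered J] (F : J ⥤ C)
    (hmono : ∀ ⦃i j : J⦄ (f : i ⟶ j), Mono (F.map f)) {t : Cocone F} (ht : IsColimit t)
    (j : J) : Mono (t.ι.app j) := by
  constructor
  intro Z a b hab
  apply jointly_epi_fp hC
  intro T hT r
  obtain ⟨hy⟩ := hT J F t ⟨ht⟩
  obtain ⟨k, f1, f2, hk⟩ := merge_of_coyoneda hy (r ≫ a) (r ≫ b)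
    (by rw [Category.assoc, Category.assoc, hab])
  haveI := hmono (f1 ≫ IsFiltered.coeqHom f1 f2)
  have key : (r ≫ a) ≫ F.map (f1 ≫ IsFiltered.coeqHom f1 f2)
      = (r ≫ b) ≫ F.map (f1 ≫ IsFiltered.coeqHom f1 f2) := by
    conv_rhs => rw [IsFiltered.coeq_condition f1 f2]
    rw [F.map_comp, F.map_comp, ← Category.assoc, ← Category.assoc, hk]
  exact (cancel_mono _).mp key


/-- One step of the image construction: coequalize all fp-pairs equalized by `m`. -/
lemma step_exists (hC : IsLFP C) {X B : C} (m : B ⟶ X) :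
    ∃ (B' : C) (π : B ⟶ B') (m' : B' ⟶ X),
      π ≫ m' = m ∧ Epi π ∧
      (∀ (T : C), IsFP T → ∀ u v : T ⟶ B, u ≫ m = v ≫ m → u ≫ π = v ≫ π) ∧
      (∀ (U : C) (t : B ⟶ U),
        (∀ (T : C), IsFP T → ∀ u v : T ⟶ B, u ≫ m = v ≫ m → u ≫ t = v ≫ t) →
        ∃ t' : B' ⟶ U, π ≫ t' = t) := by
  haveI : HasColimits C := hC.1
  haveI := hC.2.1
  let Fp := ObjectProperty.FullSubcategory (fun X : C => IsFP X)
  let G : SmallModel Fp ⥤ C := (equivSmallModel Fp).inverse ⋙ ObjectProperty.ι _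
  let I := Σ (T : SmallModel Fp), {p : (G.obj T ⟶ B) × (G.obj T ⟶ B) // p.1 ≫ m = p.2 ≫ m}
  let α : (∐ fun i : I => G.obj i.1) ⟶ B := Sigma.desc fun i => i.2.1.1
  let β : (∐ fun i : I => G.obj i.1) ⟶ B := Sigma.desc fun i => i.2.1.2
  have hGfp : ∀ i : I, IsFP (G.obj i.1) := fun i =>
    ((equivSmallModel Fp).inverse.obj i.1).2
  have hαβm : α ≫ m = β ≫ m := by
    apply Sigma.hom_ext
    intro i
    simp only [α, β, colimit.ι_desc_assoc, Cofan.mk_ι_app]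
    exact i.2.2
  refine ⟨coequalizer α β, coequalizer.π α β, coequalizer.desc m hαβm,
    coequalizer.π_desc _ _, inferInstance, ?_, ?_⟩
  · intro T hT u v huv
    let T' : Fp := ⟨T, hT⟩
    let ψ : G.obj ((equivSmallModel Fp).functor.obj T') ≅ T :=
      (ObjectProperty.ι _).mapIso ((equivSmallModel Fp).unitIso.app T').symm
    let i : I := ⟨(equivSmallModel Fp).functor.obj T',
      ⟨(ψ.hom ≫ u, ψ.hom ≫ v), by rw [Category.assoc, Category.assoc, huv]⟩⟩
    have h1 : Sigma.ι (fun i : I => G.obj i.1) i ≫ α = ψ.hom ≫ u := by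
      simp [α, i]
    have h2 : Sigma.ι (fun i : I => G.obj i.1) i ≫ β = ψ.hom ≫ v := by
      simp [β, i]
    have := coequalizer.condition α β
    have h3 : ψ.hom ≫ u ≫ coequalizer.π α β = ψ.hom ≫ v ≫ coequalizer.π α β := by
      rw [← Category.assoc, ← h1, ← Category.assoc, ← h2, Category.assoc, Category.assoc,
        this]
    exact (cancel_epi ψ.hom).mp h3
  · intro U t ht
    have hαβt : α ≫ t = β ≫ t := by
      apply Sigma.hom_ext
      intro i
      simp only [α, β, colimit.ι_desc_assoc, Cofan.mk_ι_app]
      exact ht _ (hGfp i) _ _ i.2.2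
    exact ⟨coequalizer.desc t hαβt, coequalizer.π_desc _ _⟩


/-- Existence of (strong epi, mono)-like factorizations, built as an ω-chain of
coequalizers of fp-pairs. -/
lemma image_exists (hC : IsLFP C) {A X : C} (g : A ⟶ X) :
    ∃ (Q : C) (q : A ⟶ Q) (m : Q ⟶ X), q ≫ m = g ∧ Mono m ∧ Epi q ∧
      ∀ (U W : C) (m' : U ⟶ W), Mono m' → ∀ (t : A ⟶ U) (s : Q ⟶ W),
        t ≫ m' = q ≫ s → ∃ d : Q ⟶ U, q ≫ d = t ∧ d ≫ m' = s := by
  haveI : HasColimits C := hC.1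
  choose st π0 m0 hfac hepi hkey hdesc using fun (B : C) (m : B ⟶ X) => step_exists hC m
  let ch : ℕ → Σ (B : C), B ⟶ X := fun n => Nat.rec ⟨A, g⟩ (fun _ p => ⟨st p.1 p.2, m0 p.1 p.2⟩) n
  let Qn : ℕ → C := fun n => (ch n).1
  let mn : ∀ n, Qn n ⟶ X := fun n => (ch n).2
  let πn : ∀ n, Qn n ⟶ Qn (n+1) := fun n => π0 (Qn n) (mn n)
  have hch : ∀ n, πn n ≫ mn (n+1) = mn n := fun n => hfac (Qn n) (mn n)
  have hepin : ∀ n, Epi (πn n) := fun n => hepi _ _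
  have hkeyn : ∀ n (T : C), IsFP T → ∀ u v : T ⟶ Qn n,
      u ≫ mn n = v ≫ mn n → u ≫ πn n = v ≫ πn n := fun n => hkey _ _
  have hdescn : ∀ n (U : C) (t : Qn n ⟶ U),
      (∀ T, IsFP T → ∀ u v : T ⟶ Qn n, u ≫ mn n = v ≫ mn n → u ≫ t = v ≫ t) →
      ∃ t', πn n ≫ t' = t := fun n => hdesc _ _
  let dF : IxN.{v} ⥤ ℕ :=
    { obj := IxN.n
      map := fun {a b} h => homOfLE h.down.down
      map_id := fun _ => Subsingleton.elim _ _
      map_comp := fun _ _ => Subsingleton.elim _ _ }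
  let FU : IxN.{v} ⥤ C := dF ⋙ Functor.ofSequence πn
  let ι : ∀ n : ℕ, Qn n ⟶ colimit FU := fun n => colimit.ι FU ⟨n⟩
  have hmapsucc : ∀ n : ℕ,
      FU.map (homOfLE (show (⟨n⟩ : IxN.{v}) ≤ ⟨n+1⟩ from Nat.le_succ n)) = πn n := by
    intro n
    show (Functor.ofSequence πn).map
      (dF.map (homOfLE (show (⟨n⟩ : IxN.{v}) ≤ ⟨n+1⟩ from Nat.le_succ n))) = πn n
    rw [Subsingleton.elim (dF.map (homOfLE (show (⟨n⟩ : IxN.{v}) ≤ ⟨n+1⟩ from Nat.le_succ n)))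
      (homOfLE (Nat.le_add_right n 1))]
    exact Functor.ofSequence_map_homOfLE_succ πn n
  have hsucc : ∀ n : ℕ, ι n = πn n ≫ ι (n+1) := by
    intro n
    rw [← hmapsucc n]
    exact (colimit.w FU _).symm
  have mkCocone : ∀ (U : C) (tf : ∀ n, Qn n ⟶ U), (∀ n, πn n ≫ tf (n+1) = tf n) →
      ∃ dd : colimit FU ⟶ U, ∀ n, ι n ≫ dd = tf n := by
    intro U tf htf
    let cc : Cocone (Functor.ofSequence πn) :=
      { pt := U
        ι := NatTrans.ofSequence (F := Functor.ofSequence πn) (G := (Functor.const ℕ).obj U)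
          (fun n => tf n) (fun n => by
            rw [Functor.ofSequence_map_homOfLE_succ]
            exact (htf n).trans (Category.comp_id _).symm) }
    exact ⟨colimit.desc FU (Cocone.whisker dF cc),
      fun n => colimit.ι_desc (Cocone.whisker dF cc) ⟨n⟩⟩
  obtain ⟨m, hm⟩ := mkCocone X mn hch
  refine ⟨colimit FU, ι 0, m, hm 0, ?_, ?_, ?_⟩
  · -- Mono m
    constructor
    intro Z a b hab
    apply jointly_epi_fp hC
    intro T hT r
    obtain ⟨hy⟩ := hT (IxN.{v}) FU (colimit.cocone FU) ⟨colimit.isColimit FU⟩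
    obtain ⟨⟨n₁⟩, w₁, hw₁⟩ := factors_of_coyoneda hy (r ≫ a)
    obtain ⟨⟨n₂⟩, w₂, hw₂⟩ := factors_of_coyoneda hy (r ≫ b)
    have hu : (w₁ ≫ FU.map (homOfLE (show (⟨n₁⟩ : IxN.{v}) ≤ ⟨max n₁ n₂⟩ from
        Nat.le_max_left n₁ n₂))) ≫ ι (max n₁ n₂) = r ≫ a := by
      rw [Category.assoc]
      show w₁ ≫ FU.map _ ≫ colimit.ι FU _ = r ≫ a
      rw [colimit.w]
      exact hw₁
    have hv : (w₂ ≫ FU.map (homOfLE (show (⟨n₂⟩ : IxN.{v}) ≤ ⟨max n₁ n₂⟩ from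
        Nat.le_max_right n₁ n₂))) ≫ ι (max n₁ n₂) = r ≫ b := by
      rw [Category.assoc]
      show w₂ ≫ FU.map _ ≫ colimit.ι FU _ = r ≫ b
      rw [colimit.w]
      exact hw₂
    set u : T ⟶ Qn (max n₁ n₂) := w₁ ≫ FU.map (homOfLE (show (⟨n₁⟩ : IxN.{v}) ≤ ⟨max n₁ n₂⟩ from
        Nat.le_max_left n₁ n₂)) with hudef
    set v : T ⟶ Qn (max n₁ n₂) := w₂ ≫ FU.map (homOfLE (show (⟨n₂⟩ : IxN.{v}) ≤ ⟨max n₁ n₂⟩ from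
        Nat.le_max_right n₁ n₂)) with hvdef
    have humv : u ≫ mn (max n₁ n₂) = v ≫ mn (max n₁ n₂) := by
      rw [← hm (max n₁ n₂), ← Category.assoc, ← Category.assoc, show u ≫ ι (max n₁ n₂) = r ≫ a from hu,
        show v ≫ ι (max n₁ n₂) = r ≫ b from hv,
        Category.assoc, Category.assoc, hab]
    have hk := hkeyn (max n₁ n₂) T hT u v humv
    calc r ≫ a = u ≫ ι (max n₁ n₂) := hu.symm
    _ = u ≫ πn (max n₁ n₂) ≫ ι (max n₁ n₂ + 1) := by rw [← hsucc]
    _ = v ≫ πn (max n₁ n₂) ≫ ι (max n₁ n₂ + 1) := by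
        rw [← Category.assoc, hk, Category.assoc]
    _ = v ≫ ι (max n₁ n₂) := by rw [← hsucc]
    _ = r ≫ b := hv
  · -- Epi q
    constructor
    intro Z α β hq
    apply colimit.hom_ext
    rintro ⟨n⟩
    show ι n ≫ α = ι n ≫ β
    induction n with
    | zero => exact hq
    | succ n ih =>
      have h2 : (πn n ≫ ι (n+1)) ≫ α = (πn n ≫ ι (n+1)) ≫ β := by
        rw [← hsucc]; exact ih
      haveI := hepin n
      rw [Category.assoc, Category.assoc] at h2
      exact (cancel_epi (πn n)).mp h2
  · -- lifting
    intro U W m' hm' t s hsq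
    haveI := hm'
    have hstep2 : ∀ n (tn : Qn n ⟶ U), tn ≫ m' = ι n ≫ s →
        ∃ tn1 : Qn (n+1) ⟶ U, πn n ≫ tn1 = tn ∧ tn1 ≫ m' = ι (n+1) ≫ s := by
      intro n tn htn
      have hcz : ∀ T, IsFP T → ∀ u v : T ⟶ Qn n, u ≫ mn n = v ≫ mn n →
          u ≫ tn = v ≫ tn := by
        intro T hT u v huv
        have h1 : u ≫ πn n = v ≫ πn n := hkeyn n T hT u v huv
        have h2 : u ≫ ι n = v ≫ ι n := by
          rw [hsucc n, ← Category.assoc, ← Category.assoc, h1]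
        apply (cancel_mono m').mp
        rw [Category.assoc, Category.assoc, htn, ← Category.assoc, ← Category.assoc, h2]
      obtain ⟨tn1, htn1⟩ := hdescn n U tn hcz
      refine ⟨tn1, htn1, ?_⟩
      haveI := hepin n
      apply (cancel_epi (πn n)).mp
      rw [← Category.assoc, htn1, htn, hsucc n, Category.assoc]
    have h0 : t ≫ m' = ι 0 ≫ s := hsq
    let fam : ∀ n, {p : Qn n ⟶ U // p ≫ m' = ι n ≫ s} := fun n =>
      Nat.rec ⟨t, h0⟩ (fun n p =>
        ⟨(hstep2 n p.1 p.2).choose, (hstep2 n p.1 p.2).choose_spec.2⟩) n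
    have hfamsucc : ∀ n, πn n ≫ (fam (n+1)).1 = (fam n).1 := fun n =>
      (hstep2 n (fam n).1 (fam n).2).choose_spec.1
    obtain ⟨d, hd⟩ := mkCocone U (fun n => (fam n).1) hfamsucc
    refine ⟨d, hd 0, ?_⟩
    apply colimit.hom_ext
    rintro ⟨n⟩
    show ι n ≫ d ≫ m' = ι n ≫ s
    rw [← Category.assoc, hd n, (fam n).2]


open Endofunctor in
/-- The forgetful functor from coalgebras preserves (all existing) colimits. -/
lemma forget_isColimit (H : C ⥤ C) [HasColimits C] {J : Type v} [SmallCategory J]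
    (D : J ⥤ Endofunctor.Coalgebra H) (c : Cocone D) (hc : IsColimit c) :
    Nonempty (IsColimit ((Endofunctor.Coalgebra.forget H).mapCocone c)) := by
  let FD := D ⋙ Endofunctor.Coalgebra.forget H
  let L := colimit FD
  have hnat : ∀ {j j' : J} (f : j ⟶ j'),
      (D.map f).f ≫ ((D.obj j').str ≫ H.map (colimit.ι FD j'))
        = (D.obj j).str ≫ H.map (colimit.ι FD j) := by
    intro j j' f
    erw [← Category.assoc, ← (D.map f).h, Category.assoc, ← H.map_comp]
    congr 1
    exact congrArg H.map (colimit.w FD f)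
  let cocH : Cocone FD :=
    { pt := H.obj L
      ι := { app := fun j => (D.obj j).str ≫ H.map (colimit.ι FD j)
             naturality := fun j j' f => by
               exact (hnat f).trans (Category.comp_id _).symm } }
  let str : L ⟶ H.obj L := colimit.desc FD cocH
  have hstr : ∀ j, colimit.ι FD j ≫ str = (D.obj j).str ≫ H.map (colimit.ι FD j) :=
    fun j => colimit.ι_desc cocH j
  let Lco : Endofunctor.Coalgebra H := ⟨L, str⟩
  let coc2 : Cocone D :=
    { pt := Lco
      ι := { app := fun j => ⟨colimit.ι FD j, (hstr j).symm⟩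
             naturality := fun j j' f => by
               apply Endofunctor.Coalgebra.ext
               show (D.map f).f ≫ colimit.ι FD j' = colimit.ι FD j ≫ 𝟙 L
               rw [Category.comp_id]
               exact colimit.w FD f } }
  let w : c.pt ⟶ Lco := hc.desc coc2
  let u : L ⟶ c.pt.V := colimit.desc FD ((Endofunctor.Coalgebra.forget H).mapCocone c)
  have hu : ∀ j, colimit.ι FD j ≫ u = (c.ι.app j).f :=
    fun j => colimit.ι_desc _ j
  have hucoalg : str ≫ H.map u = u ≫ c.pt.str := by
    apply colimit.hom_ext
    intro j
    erw [← Category.assoc, hstr j, Category.assoc, ← H.map_comp, hu j, ← Category.assoc,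
      hu j, (c.ι.app j).h]
    rfl
  let u' : Lco ⟶ c.pt := ⟨u, hucoalg⟩
  have hwu : w ≫ u' = 𝟙 c.pt := by
    apply hc.hom_ext
    intro j
    apply Endofunctor.Coalgebra.ext
    have h1 : c.ι.app j ≫ w = coc2.ι.app j := hc.fac coc2 j
    have h2 : (c.ι.app j ≫ w).f = colimit.ι FD j := congrArg Endofunctor.Coalgebra.Hom.f h1
    show (c.ι.app j ≫ w ≫ u').f = (c.ι.app j ≫ 𝟙 c.pt).f
    rw [← Category.assoc]
    show (c.ι.app j ≫ w).f ≫ u = _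
    erw [h2, hu j]
    simp
  have huw : u ≫ w.f = 𝟙 L := by
    apply colimit.hom_ext
    intro j
    rw [← Category.assoc, hu j]
    have h1 : c.ι.app j ≫ w = coc2.ι.app j := hc.fac coc2 j
    have h2 : (c.ι.app j).f ≫ w.f = colimit.ι FD j := congrArg Endofunctor.Coalgebra.Hom.f h1
    erw [h2, Category.comp_id]
  haveI : IsIso u := ⟨w.f, huw, congrArg Endofunctor.Coalgebra.Hom.f hwu⟩
  exact ⟨IsColimit.ofIsoColimit (colimit.isColimit FD)
    (Cocones.ext (@asIso _ _ _ _ u this) (fun j => hu j))⟩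

end Stmt8Aux

open LFF in
/-- Every filtered colimit of coalgebras with finitely generated carrier is lfg. -/
theorem stmt8 {C : Type u} [Category.{v} C] (hC : IsLFP C)
    (H : C ⥤ C) (hfin : IsFinitary H) (hm : PreservesNonemptyMonos H)
    {J : Type v} [SmallCategory J] [IsFiltered J]
    (D : J ⥤ Endofunctor.Coalgebra H) (hfg : ∀ j, IsFG (D.obj j).V)
    (c : Cocone D) (hc : IsColimit c) :
    IsLFGCoalgebra H c.pt := by
  haveI : HasColimits C := hC.1
  intro S hS f
  obtain ⟨hcV⟩ := Stmt8Aux.forget_isColimit H D c hc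
  choose Qo qo mo hqm hmono hepi hlift using fun j : J => Stmt8Aux.image_exists hC ((c.ι.app j).f)
  have hconn : ∀ (j j' : J) (g : j ⟶ j'), ∃ d : Qo j ⟶ Qo j',
      qo j ≫ d = (D.map g).f ≫ qo j' ∧ d ≫ mo j' = mo j := by
    intro j j' g
    have hnat : (D.map g).f ≫ (c.ι.app j').f = (c.ι.app j).f :=
      congrArg Endofunctor.Coalgebra.Hom.f (c.w g)
    have hsq : ((D.map g).f ≫ qo j') ≫ mo j' = qo j ≫ mo j := by
      rw [Category.assoc, hqm j', hqm j, hnat]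
    exact hlift j _ _ (mo j') (hmono j') ((D.map g).f ≫ qo j') (mo j) hsq
  choose dmap hd1 hd2 using hconn
  let Im : J ⥤ C :=
    { obj := Qo
      map := fun {j j'} g => dmap j j' g
      map_id := fun j => by
        haveI := hmono j
        apply (cancel_mono (mo j)).mp
        rw [hd2, Category.id_comp]
      map_comp := fun {i j k} g g' => by
        haveI := hmono k
        apply (cancel_mono (mo k)).mp
        rw [hd2, Category.assoc, hd2, hd2] }
  have hImMono : ∀ ⦃j j'⦄ (g : j ⟶ j'), Mono (Im.map g) := by
    intro j j' g
    haveI : Mono (dmap j j' g ≫ mo j') := by rw [hd2]; exact hmono j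
    exact mono_of_mono (dmap j j' g) (mo j')
  let tIm : Cocone Im :=
    { pt := c.pt.V
      ι := { app := mo
             naturality := fun j j' g => by
               show dmap j j' g ≫ mo j' = mo j ≫ 𝟙 _
               rw [hd2, Category.comp_id] } }
  let mkcc : Cocone Im → Cocone (D ⋙ Endofunctor.Coalgebra.forget H) := fun r =>
    { pt := r.pt
      ι := { app := fun j => qo j ≫ r.ι.app j
             naturality := fun j j' g => by
               show (D.map g).f ≫ qo j' ≫ r.ι.app j' = (qo j ≫ r.ι.app j) ≫ 𝟙 _
               rw [Category.comp_id, ← Category.assoc, ← hd1 j j' g, Category.assoc,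
                 show dmap j j' g ≫ r.ι.app j' = r.ι.app j from r.w g] } }
  have htIm : IsColimit tIm :=
    { desc := fun r => hcV.desc (mkcc r)
      fac := fun r j => by
        haveI := hepi j
        show mo j ≫ hcV.desc (mkcc r) = r.ι.app j
        apply (cancel_epi (qo j)).mp
        erw [← Category.assoc, hqm j]
        exact hcV.fac (mkcc r) j
      uniq := fun r m' hm' => by
        apply hcV.hom_ext
        intro j
        have hfacj : (c.ι.app j).f ≫ hcV.desc (mkcc r) = qo j ≫ r.ι.app j :=
          hcV.fac (mkcc r) j
        show (c.ι.app j).f ≫ m' = (c.ι.app j).f ≫ hcV.desc (mkcc r)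
        rw [hfacj, ← hqm j, Category.assoc]
        congr 1
        exact hm' j }
  obtain ⟨hSc⟩ := hS J Im hImMono tIm ⟨htIm⟩
  obtain ⟨j, f₀, hf₀⟩ := Stmt8Aux.factors_of_coyoneda hSc f
  have hf₀' : f₀ ≫ mo j = f := hf₀
  by_cases hstrict : IsStrictInitial (Qo j)
  · haveI : IsIso (qo j) := hstrict.2 _ (qo j)
    refine ⟨D.obj j, c.ι.app j, f₀ ≫ inv (qo j), hfg j, ?_⟩
    rw [Category.assoc, ← hqm j, IsIso.inv_hom_id_assoc]
    exact hf₀'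
  · haveI hHmono : Mono (H.map (mo j)) := hm (mo j) (hmono j) hstrict
    have hsq : ((D.obj j).str ≫ H.map (qo j)) ≫ H.map (mo j)
        = qo j ≫ (mo j ≫ c.pt.str) := by
      rw [Category.assoc, ← H.map_comp, hqm j, (c.ι.app j).h, ← hqm j, Category.assoc]
      rfl
    obtain ⟨str, hstr1, hstr2⟩ := hlift j _ _ (H.map (mo j)) hHmono
      ((D.obj j).str ≫ H.map (qo j)) (mo j ≫ c.pt.str) hsq
    refine ⟨⟨Qo j, str⟩, ⟨mo j, hstr2⟩, f₀, ?_, hf₀'⟩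
    intro J₂ _ _ F₂ hmono₂ t₂ hne₂
    obtain ⟨ht₂⟩ := hne₂
    have hiotamono : ∀ k, Mono (t₂.ι.app k) := fun k => Stmt8Aux.mono_ι hC F₂ hmono₂ ht₂ k
    refine ⟨Types.FilteredColimit.isColimitOf _
      ((coyoneda.obj (Opposite.op (Qo j))).mapCocone t₂) ?_ ?_⟩
    · intro x
      obtain ⟨hgc⟩ := hfg j J₂ F₂ hmono₂ t₂ ⟨ht₂⟩
      obtain ⟨k, w, hw⟩ := Stmt8Aux.factors_of_coyoneda hgc (qo j ≫ x)
      obtain ⟨d, hd1', hd2'⟩ := hlift j _ _ (t₂.ι.app k) (hiotamono k) w x hw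
      exact ⟨k, d, hd2'.symm⟩
    · intro k k' x x' hxx
      obtain ⟨l, uu, vv, -⟩ := IsFilteredOrEmpty.cocone_objs k k'
      refine ⟨l, uu, vv, ?_⟩
      haveI := hiotamono l
      apply (cancel_mono (t₂.ι.app l)).mp
      show (x ≫ F₂.map uu) ≫ t₂.ι.app l = (x' ≫ F₂.map vv) ≫ t₂.ι.app l
      rw [Category.assoc, Category.assoc, t₂.w uu, t₂.w vv]
      exact hxx
end

section
/- Every locally finitely generated coalgebra is the directed colimit of its subcoalgebras with finitely generated carrier (the diagram of fg-carried subcoalgebras is cofinal in the diagram of all fg subobjects of the carrier). -/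
open CategoryTheory CategoryTheory.Limits

universe v u

namespace LFFProof

open LFF

variable {C : Type u} [Category.{v} C]

/-- Morphisms out of finitely presentable objects are jointly epic in an lfp category. -/
theorem jointlyEpic (hC : IsLFP C) {T Z : C} {u v : T ⟶ Z}
    (h : ∀ (G : C), IsFP G → ∀ g : G ⟶ T, g ≫ u = g ≫ v) : u = v := by
  obtain ⟨J, _, _, F, c, hfp, ⟨hc⟩, ⟨ρ⟩⟩ := hC.2.2 T
  have h2 : ρ.hom ≫ u = ρ.hom ≫ v := by
    apply hc.hom_ext
    intro j
    have := h _ (hfp j) (c.ι.app j ≫ ρ.hom)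
    simpa [Category.assoc] using this
  exact (cancel_epi ρ.hom).1 h2

section MappedCocone

variable {J : Type v} [SmallCategory J] {F : J ⥤ C} {c : Cocone F} {G : C}

/-- Surjectivity extracted from preservation of a colimit by `Hom(G, -)`. -/
theorem map_surj (mc : IsColimit ((coyoneda.obj (Opposite.op G)).mapCocone c))
    (x : G ⟶ c.pt) : ∃ (j : J) (y : G ⟶ F.obj j), y ≫ c.ι.app j = x := by
  obtain ⟨j, y, hy⟩ := Types.jointly_surjective _ mc x
  exact ⟨j, y, hy⟩

variable [IsFiltered J]

theorem map_merge (mc : IsColimit ((coyoneda.obj (Opposite.op G)).mapCocone c))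
    {i j : J} (x : G ⟶ F.obj i) (y : G ⟶ F.obj j)
    (h : x ≫ c.ι.app i = y ≫ c.ι.app j) :
    ∃ (k : J) (f : i ⟶ k) (g : j ⟶ k), x ≫ F.map f = y ≫ F.map g := by
  have := (Types.FilteredColimit.isColimit_eq_iff
      (F ⋙ coyoneda.obj (Opposite.op G)) mc (xi := x) (xj := y)).1 h
  exact this

theorem map_merge_single (mc : IsColimit ((coyoneda.obj (Opposite.op G)).mapCocone c))
    {i : J} (x y : G ⟶ F.obj i) (h : x ≫ c.ι.app i = y ≫ c.ι.app i) :
    ∃ (l : J) (σ : i ⟶ l), x ≫ F.map σ = y ≫ F.map σ := by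
  obtain ⟨k, f, g, hfg⟩ := map_merge mc x y h
  obtain ⟨l, w, hw⟩ := IsFilteredOrEmpty.cocone_maps f g
  refine ⟨l, f ≫ w, ?_⟩
  calc x ≫ F.map (f ≫ w) = (x ≫ F.map f) ≫ F.map w := by rw [F.map_comp, Category.assoc]
    _ = (y ≫ F.map g) ≫ F.map w := by rw [hfg]
    _ = y ≫ F.map (g ≫ w) := by rw [F.map_comp, Category.assoc]
    _ = y ≫ F.map (f ≫ w) := by rw [hw]

end MappedCocone

/-- In an lfp category, the legs of a filtered colimit of a diagram of monomorphisms
are monomorphisms. -/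
theorem legs_mono (hC : IsLFP C) {J : Type v} [SmallCategory J] [IsFiltered J] {F : J ⥤ C}
    (hmono : ∀ ⦃i j : J⦄ (f : i ⟶ j), Mono (F.map f)) {c : Cocone F} (hc : IsColimit c)
    (j : J) : Mono (c.ι.app j) := by
  constructor
  intro Z u v huv
  refine jointlyEpic hC fun G hG g => ?_
  have mc := (hG J F c ⟨hc⟩).some
  obtain ⟨l, σ, hσ⟩ := map_merge_single mc (g ≫ u) (g ≫ v)
    (by rw [Category.assoc, Category.assoc, huv])
  haveI := hmono σ
  exact (cancel_mono (F.map σ)).1 hσ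

theorem isFG_of_isFP {G : C} (h : IsFP G) : IsFG G := fun J _ _ F _ c hc => h J F c hc

/-- Finitely generated objects are closed under binary coproducts. -/
theorem isFG_coprod [HasBinaryCoproducts C] {A B : C} (hA : IsFG A) (hB : IsFG B) :
    IsFG (A ⨿ B) := by
  intro J _ _ F hmono c hc
  obtain ⟨hc⟩ := hc
  have mcA := (hA J F hmono c ⟨hc⟩).some
  have mcB := (hB J F hmono c ⟨hc⟩).some
  refine ⟨Types.FilteredColimit.isColimitOf _ _ ?_ ?_⟩
  · intro x
    obtain ⟨j₁, y₁, h₁⟩ := map_surj mcA (coprod.inl ≫ x)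
    obtain ⟨j₂, y₂, h₂⟩ := map_surj mcB (coprod.inr ≫ x)
    obtain ⟨k, α, β, -⟩ := IsFilteredOrEmpty.cocone_objs j₁ j₂
    refine ⟨k, coprod.desc (y₁ ≫ F.map α) (y₂ ≫ F.map β), ?_⟩
    show x = coprod.desc (y₁ ≫ F.map α) (y₂ ≫ F.map β) ≫ c.ι.app k
    apply coprod.hom_ext
    · rw [← h₁, coprod.inl_desc_assoc, Category.assoc, c.w α]
    · rw [← h₂, coprod.inr_desc_assoc, Category.assoc, c.w β]
  · intro i j xi xj hij
    have hij' : xi ≫ c.ι.app i = xj ≫ c.ι.app j := hij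
    obtain ⟨k, α, β, -⟩ := IsFilteredOrEmpty.cocone_objs i j
    obtain ⟨l₁, σ₁, hσ₁⟩ := map_merge_single mcA
      (coprod.inl ≫ xi ≫ F.map α) (coprod.inl ≫ xj ≫ F.map β) (by
        simp only [Category.assoc, Cocone.w]
        exact congrArg (fun z => coprod.inl ≫ z) hij')
    simp only [Category.assoc] at hσ₁
    obtain ⟨l₂, σ₂, hσ₂⟩ := map_merge_single mcB
      (coprod.inr ≫ xi ≫ F.map α ≫ F.map σ₁) (coprod.inr ≫ xj ≫ F.map β ≫ F.map σ₁) (by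
        simp only [Category.assoc, Cocone.w]
        exact congrArg (fun z => coprod.inr ≫ z) hij')
    simp only [Category.assoc] at hσ₂
    refine ⟨l₂, α ≫ σ₁ ≫ σ₂, β ≫ σ₁ ≫ σ₂, ?_⟩
    show xi ≫ F.map (α ≫ σ₁ ≫ σ₂) = xj ≫ F.map (β ≫ σ₁ ≫ σ₂)
    apply coprod.hom_ext
    · have := congrArg (fun z => z ≫ F.map σ₂) hσ₁
      simpa only [Functor.map_comp, Category.assoc] using this
    · simpa only [Functor.map_comp, Category.assoc] using hσ₂

section Image

variable [HasColimits C]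
variable [EssentiallySmall.{v} (ObjectProperty.FullSubcategory (fun X : C => LFF.IsFP X))]

/-- A small skeleton of the finitely presentable objects. -/
noncomputable def objC (s : SmallModel (ObjectProperty.FullSubcategory (fun X : C => LFF.IsFP X))) : C :=
  ((equivSmallModel (ObjectProperty.FullSubcategory (fun X : C => LFF.IsFP X))).inverse.obj s).obj

theorem isFP_objC (s : SmallModel (ObjectProperty.FullSubcategory (fun X : C => LFF.IsFP X))) :
    LFF.IsFP (objC s) :=
  ((equivSmallModel (ObjectProperty.FullSubcategory (fun X : C => LFF.IsFP X))).inverse.obj s).property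

theorem exists_skel (G : C) (hG : LFF.IsFP G) :
    ∃ s, Nonempty (objC (C := C) s ≅ G) :=
  ⟨(equivSmallModel (ObjectProperty.FullSubcategory (fun X : C => LFF.IsFP X))).functor.obj ⟨G, hG⟩,
    ⟨(ObjectProperty.ι _).mapIso
      (((equivSmallModel (ObjectProperty.FullSubcategory (fun X : C => LFF.IsFP X))).unitIso.app
        ⟨G, hG⟩).symm)⟩⟩

variable {Y : C}

/-- Index type of pairs of parallel morphisms out of skeletal fp objects
that are equalized by `f`. -/
abbrev PairIdx (A : C) (f : A ⟶ Y) : Type v :=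
  Σ' (s : SmallModel (ObjectProperty.FullSubcategory (fun X : C => LFF.IsFP X)))
    (x : objC s ⟶ A) (y : objC s ⟶ A), x ≫ f = y ≫ f

noncomputable def pairU (A : C) (f : A ⟶ Y) :
    (∐ fun p : PairIdx A f => objC p.1) ⟶ A :=
  Sigma.desc fun p => p.2.1

noncomputable def pairV (A : C) (f : A ⟶ Y) :
    (∐ fun p : PairIdx A f => objC p.1) ⟶ A :=
  Sigma.desc fun p => p.2.2.1

theorem pair_w (A : C) (f : A ⟶ Y) : pairU A f ≫ f = pairV A f ≫ f := by
  apply Sigma.hom_ext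
  intro p
  simp only [pairU, pairV, ← Category.assoc, Sigma.ι_desc]
  exact p.2.2.2

/-- The chain of iterated "pair coequalizers" starting at `f₀ : A₀ ⟶ Y`. -/
noncomputable def chain (A₀ : C) (f₀ : A₀ ⟶ Y) : ℕ → Σ' (A : C), A ⟶ Y
  | 0 => ⟨A₀, f₀⟩
  | n + 1 =>
    ⟨coequalizer (pairU (chain A₀ f₀ n).1 (chain A₀ f₀ n).2)
        (pairV (chain A₀ f₀ n).1 (chain A₀ f₀ n).2),
      coequalizer.desc (chain A₀ f₀ n).2 (pair_w _ _)⟩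

noncomputable abbrev An (A₀ : C) (f₀ : A₀ ⟶ Y) (n : ℕ) : C := (chain A₀ f₀ n).1

noncomputable abbrev fn (A₀ : C) (f₀ : A₀ ⟶ Y) (n : ℕ) : An A₀ f₀ n ⟶ Y := (chain A₀ f₀ n).2

noncomputable def en (A₀ : C) (f₀ : A₀ ⟶ Y) (n : ℕ) : An A₀ f₀ n ⟶ An A₀ f₀ (n + 1) :=
  coequalizer.π (pairU (An A₀ f₀ n) (fn A₀ f₀ n)) (pairV (An A₀ f₀ n) (fn A₀ f₀ n))

theorem en_fn (A₀ : C) (f₀ : A₀ ⟶ Y) (n : ℕ) :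
    en A₀ f₀ n ≫ fn A₀ f₀ (n + 1) = fn A₀ f₀ n :=
  coequalizer.π_desc _ _

instance en_epi (A₀ : C) (f₀ : A₀ ⟶ Y) (n : ℕ) : Epi (en A₀ f₀ n) := by
  unfold en; exact coequalizer.π_epi

theorem pair_coeq (A₀ : C) (f₀ : A₀ ⟶ Y) (n : ℕ)
    (p : PairIdx (An A₀ f₀ n) (fn A₀ f₀ n)) :
    p.2.1 ≫ en A₀ f₀ n = p.2.2.1 ≫ en A₀ f₀ n := by
  have h := coequalizer.condition (pairU (An A₀ f₀ n) (fn A₀ f₀ n))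
    (pairV (An A₀ f₀ n) (fn A₀ f₀ n))
  have h2 := congrArg (fun z => Sigma.ι (fun p : PairIdx (An A₀ f₀ n) (fn A₀ f₀ n) =>
    objC p.1) p ≫ z) h
  simp only [pairU, pairV, ← Category.assoc, Sigma.ι_desc, en] at h2
  exact h2

/-- The chain as a natural transformation to the constant functor `Y`. -/
noncomputable def chainNat (A₀ : C) (f₀ : A₀ ⟶ Y) :
    Functor.ofSequence (en A₀ f₀) ⟶ (Functor.const ℕ).obj Y :=
  NatTrans.ofSequence (F := Functor.ofSequence (en A₀ f₀)) (G := (Functor.const ℕ).obj Y)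
    (fun n => fn A₀ f₀ n) (by
      intro n
      simp only [Functor.ofSequence_map_homOfLE_succ, Functor.const_obj_map,
        Functor.const_obj_obj, Category.comp_id]
      exact (en_fn A₀ f₀ n).trans (Category.comp_id _).symm)

/-- The chain reindexed over `AsSmall.{v} ℕ`. -/
noncomputable def chainF (A₀ : C) (f₀ : A₀ ⟶ Y) : AsSmall.{v} ℕ ⥤ C :=
  AsSmall.down ⋙ Functor.ofSequence (en A₀ f₀)

instance : IsFiltered (AsSmall.{v} ℕ) := IsFiltered.of_equivalence AsSmall.equiv

/-- The colimit of the chain: the "image object". -/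
noncomputable def imgObj (A₀ : C) (f₀ : A₀ ⟶ Y) : C := colimit (chainF A₀ f₀)

noncomputable def imgι (A₀ : C) (f₀ : A₀ ⟶ Y) (n : ℕ) : An A₀ f₀ n ⟶ imgObj A₀ f₀ :=
  colimit.ι (chainF A₀ f₀) (AsSmall.up.obj n)

theorem imgι_w (A₀ : C) (f₀ : A₀ ⟶ Y) {n m : ℕ} (hnm : n ≤ m) :
    (Functor.ofSequence (en A₀ f₀)).map (homOfLE hnm) ≫ imgι A₀ f₀ m = imgι A₀ f₀ n := by
  have h := colimit.w (chainF A₀ f₀) (AsSmall.up.map (homOfLE hnm))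
  exact h

theorem imgι_succ (A₀ : C) (f₀ : A₀ ⟶ Y) (n : ℕ) :
    en A₀ f₀ n ≫ imgι A₀ f₀ (n + 1) = imgι A₀ f₀ n := by
  have h := imgι_w A₀ f₀ (Nat.le_add_right n 1)
  rw [Functor.ofSequence_map_homOfLE_succ] at h
  exact h

/-- The cocone on the chain with point `Y`. -/
noncomputable def chainCoconeY (A₀ : C) (f₀ : A₀ ⟶ Y) : Cocone (chainF A₀ f₀) where
  pt := Y
  ι :=
    { app := fun n => fn A₀ f₀ (AsSmall.down.obj n)
      naturality := fun n m g => by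
        have h := (chainNat A₀ f₀).naturality (AsSmall.down.map g)
        simp only [Functor.const_obj_obj, Functor.const_obj_map, Category.comp_id] at h ⊢
        exact h.trans (Category.comp_id _).symm }

/-- The "image part" morphism `imgObj ⟶ Y`. -/
noncomputable def imgHom (A₀ : C) (f₀ : A₀ ⟶ Y) : imgObj A₀ f₀ ⟶ Y :=
  colimit.desc (chainF A₀ f₀) (chainCoconeY A₀ f₀)

theorem imgι_imgHom (A₀ : C) (f₀ : A₀ ⟶ Y) (n : ℕ) :
    imgι A₀ f₀ n ≫ imgHom A₀ f₀ = fn A₀ f₀ n :=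
  colimit.ι_desc (chainCoconeY A₀ f₀) (AsSmall.up.obj n)

theorem imgι_zero_imgHom (A₀ : C) (f₀ : A₀ ⟶ Y) :
    imgι A₀ f₀ 0 ≫ imgHom A₀ f₀ = f₀ :=
  imgι_imgHom A₀ f₀ 0

/-- Any two morphisms from an fp object into a chain stage which are equalized by `fn`
are equalized at the next stage. -/
theorem merge_step (A₀ : C) (f₀ : A₀ ⟶ Y) (n : ℕ) {G : C} (hG : LFF.IsFP G)
    (x y : G ⟶ An A₀ f₀ n) (h : x ≫ fn A₀ f₀ n = y ≫ fn A₀ f₀ n) :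
    x ≫ en A₀ f₀ n = y ≫ en A₀ f₀ n := by
  obtain ⟨s, ⟨φ⟩⟩ := exists_skel G hG
  have hp := pair_coeq A₀ f₀ n ⟨s, φ.hom ≫ x, φ.hom ≫ y, by
    rw [Category.assoc, Category.assoc, h]⟩
  simp only [Category.assoc] at hp
  exact (cancel_epi φ.hom).1 hp

/-- `imgHom` is a monomorphism. -/
theorem imgHom_mono (hC : LFF.IsLFP C) (A₀ : C) (f₀ : A₀ ⟶ Y) :
    Mono (imgHom A₀ f₀) := by
  constructor
  intro Z g₁ g₂ h12
  refine jointlyEpic hC fun G hG g => ?_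
  have mc := (hG (AsSmall.{v} ℕ) (chainF A₀ f₀) (colimit.cocone _)
    ⟨colimit.isColimit _⟩).some
  obtain ⟨ja, a', ha⟩ := map_surj mc (g ≫ g₁)
  obtain ⟨jb, b', hb⟩ := map_surj mc (g ≫ g₂)
  obtain ⟨na⟩ := ja
  obtain ⟨nb⟩ := jb
  have ha' : a' ≫ imgι A₀ f₀ na = g ≫ g₁ := ha
  have hb' : b' ≫ imgι A₀ f₀ nb = g ≫ g₂ := hb
  have key : ∀ (n : ℕ) (z : G ⟶ An A₀ f₀ n) (m : ℕ) (hnm : n ≤ m),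
      (z ≫ (Functor.ofSequence (en A₀ f₀)).map (homOfLE hnm)) ≫ imgι A₀ f₀ m
        = z ≫ imgι A₀ f₀ n := by
    intro n z m hnm
    exact (Category.assoc _ _ _).trans (congrArg (fun w => z ≫ w) (imgι_w A₀ f₀ hnm))
  obtain ⟨N, hle₁, hle₂⟩ : ∃ t : ℕ, na ≤ t ∧ nb ≤ t :=
    ⟨max na nb, le_max_left _ _, le_max_right _ _⟩
  obtain ⟨a'', ha''⟩ : ∃ t : G ⟶ An A₀ f₀ N,
      t = a' ≫ (Functor.ofSequence (en A₀ f₀)).map (homOfLE hle₁) := ⟨_, rfl⟩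
  obtain ⟨b'', hb''⟩ : ∃ t : G ⟶ An A₀ f₀ N,
      t = b' ≫ (Functor.ofSequence (en A₀ f₀)).map (homOfLE hle₂) := ⟨_, rfl⟩
  have haN : a'' ≫ imgι A₀ f₀ N = g ≫ g₁ := by
    rw [ha'']; exact (key na a' N hle₁).trans ha'
  have hbN : b'' ≫ imgι A₀ f₀ N = g ≫ g₂ := by
    rw [hb'']; exact (key nb b' N hle₂).trans hb'
  have hfneq : a'' ≫ fn A₀ f₀ N = b'' ≫ fn A₀ f₀ N := by
    rw [← imgι_imgHom A₀ f₀ N, ← Category.assoc, ← Category.assoc, haN, hbN,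
      Category.assoc, Category.assoc, h12]
  have hco := merge_step A₀ f₀ N hG a'' b'' hfneq
  calc g ≫ g₁ = a'' ≫ imgι A₀ f₀ N := haN.symm
    _ = (a'' ≫ en A₀ f₀ N) ≫ imgι A₀ f₀ (N + 1) := by rw [Category.assoc, imgι_succ]
    _ = (b'' ≫ en A₀ f₀ N) ≫ imgι A₀ f₀ (N + 1) := by rw [hco]
    _ = b'' ≫ imgι A₀ f₀ N := by rw [Category.assoc, imgι_succ]
    _ = g ≫ g₂ := hbN

/-- The canonical map `A₀ ⟶ imgObj` has the left lifting property against all monos. -/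
theorem img_llp (A₀ : C) (f₀ : A₀ ⟶ Y) {W Z : C} (M : W ⟶ Z) (hM : Mono M)
    (a : A₀ ⟶ W) (b : imgObj A₀ f₀ ⟶ Z) (sq : imgι A₀ f₀ 0 ≫ b = a ≫ M) :
    ∃ δ : imgObj A₀ f₀ ⟶ W, imgι A₀ f₀ 0 ≫ δ = a ∧ δ ≫ M = b := by
  -- build compatible maps on all stages
  have D : ∀ n : ℕ, { d : An A₀ f₀ n ⟶ W // d ≫ M = imgι A₀ f₀ n ≫ b } := by
    intro n
    induction n with
    | zero => exact ⟨a, sq.symm⟩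
    | succ n ih =>
      obtain ⟨d, hd⟩ := ih
      have hcoeq : pairU (An A₀ f₀ n) (fn A₀ f₀ n) ≫ d
          = pairV (An A₀ f₀ n) (fn A₀ f₀ n) ≫ d := by
        apply Sigma.hom_ext
        intro p
        simp only [pairU, pairV, ← Category.assoc, Sigma.ι_desc]
        -- p.2.1 ≫ d = p.2.2.1 ≫ d, via M
        rw [← cancel_mono M]
        simp only [Category.assoc, hd]
        rw [← imgι_succ A₀ f₀ n]
        simp only [← Category.assoc]
        rw [pair_coeq A₀ f₀ n p]
      refine ⟨coequalizer.desc d hcoeq, ?_⟩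
      rw [← cancel_epi (en A₀ f₀ n)]
      have : en A₀ f₀ n ≫ coequalizer.desc d hcoeq = d := coequalizer.π_desc _ _
      have h1 : (en A₀ f₀ n ≫ coequalizer.desc d hcoeq) ≫ M = d ≫ M := congrArg (· ≫ M) this
      have h3 : imgι A₀ f₀ n ≫ b = en A₀ f₀ n ≫ imgι A₀ f₀ (n + 1) ≫ b := by
        rw [← Category.assoc, imgι_succ]
      exact (Category.assoc _ _ _).symm.trans (h1.trans (hd.trans h3))
  -- naturality via cancel_mono
  let cw : Cocone (chainF A₀ f₀) :=
    { pt := W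
      ι :=
        { app := fun n => (D (AsSmall.down.obj n)).1
          naturality := fun n m g => by
            simp only [Functor.const_obj_obj, Functor.const_obj_map, Category.comp_id]
            rw [← cancel_mono M]
            have hw : (chainF A₀ f₀).map g ≫ imgι A₀ f₀ (AsSmall.down.obj m)
                = imgι A₀ f₀ (AsSmall.down.obj n) := by
              have h := colimit.w (chainF A₀ f₀) g
              exact h
            exact (Category.assoc _ _ _).trans ((congrArg (fun z => (chainF A₀ f₀).map g ≫ z)
              (D (AsSmall.down.obj m)).2).trans ((Category.assoc _ _ _).symm.trans
              ((congrArg (· ≫ b) hw).trans ((D (AsSmall.down.obj n)).2.symm.trans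
              (congrArg (· ≫ M) (Category.comp_id _).symm))))) } }
  have hD0 : (D 0).1 = a := by
    exact (cancel_mono M).1 ((D 0).2.trans sq)
  refine ⟨colimit.desc _ cw, ?_, ?_⟩
  · have h := colimit.ι_desc cw (AsSmall.up.obj 0)
    exact h.trans hD0
  · apply colimit.hom_ext
    intro n
    refine (Category.assoc _ _ _).symm.trans ((congrArg (· ≫ M) (colimit.ι_desc cw n)).trans ?_)
    have h := (D (AsSmall.down.obj n)).2
    exact h

/-- The image object of a chain starting at a finitely generated object is
finitely generated. -/
theorem isFG_img (hC : LFF.IsLFP C) {A₀ : C} {f₀ : A₀ ⟶ Y} (hA : LFF.IsFG A₀) :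
    LFF.IsFG (imgObj A₀ f₀) := by
  intro J _ _ F hmono c hc
  obtain ⟨hc⟩ := hc
  have hlegs : ∀ j, Mono (c.ι.app j) := legs_mono hC hmono hc
  refine ⟨Types.FilteredColimit.isColimitOf _ _ ?_ ?_⟩
  · intro x
    have mcA := (hA J F hmono c ⟨hc⟩).some
    obtain ⟨j, g, hg⟩ := map_surj mcA (imgι A₀ f₀ 0 ≫ x)
    obtain ⟨δ, _, hδ2⟩ := img_llp A₀ f₀ (c.ι.app j) (hlegs j) g x hg.symm
    exact ⟨j, δ, hδ2.symm⟩
  · intro i j xi xj hij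
    have hij' : xi ≫ c.ι.app i = xj ≫ c.ι.app j := hij
    obtain ⟨k, α, β, -⟩ := IsFilteredOrEmpty.cocone_objs i j
    refine ⟨k, α, β, ?_⟩
    show xi ≫ F.map α = xj ≫ F.map β
    haveI := hlegs k
    rw [← cancel_mono (c.ι.app k)]
    rw [Category.assoc, Category.assoc, c.w α, c.w β]
    exact hij'

/-- Factorization of a coalgebra homomorphism into `X` through a subcoalgebra with
finitely generated carrier. -/
theorem image_exists (hC : LFF.IsLFP C) (H : C ⥤ C) (hm : LFF.PreservesNonemptyMonos H)
    (X : Endofunctor.Coalgebra H) (P : Endofunctor.Coalgebra H) (hP : LFF.IsFG P.V)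
    (h : P ⟶ X) :
    ∃ (T : Endofunctor.Coalgebra H) (mT : T ⟶ X) (e : P ⟶ T),
      LFF.IsFG T.V ∧ Mono mT.f ∧ e ≫ mT = h := by
  have hm_mono : Mono (imgHom P.V h.f) := imgHom_mono hC P.V h.f
  have he₀m : imgι P.V h.f 0 ≫ imgHom P.V h.f = h.f := imgι_zero_imgHom P.V h.f
  have hIfg : LFF.IsFG (imgObj P.V h.f) := isFG_img hC hP
  by_cases hstrict : LFF.IsStrictInitial (imgObj P.V h.f)
  · have hinit : IsInitial (imgObj P.V h.f) := hstrict.1.some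
    haveI : IsIso (imgι P.V h.f 0) := hstrict.2 _ (imgι P.V h.f 0)
    refine ⟨⟨imgObj P.V h.f, inv (imgι P.V h.f 0) ≫ P.str ≫ H.map (imgι P.V h.f 0)⟩,
      ⟨imgHom P.V h.f, ?_⟩, ⟨imgι P.V h.f 0, ?_⟩, hIfg, hm_mono, ?_⟩
    · exact hinit.hom_ext _ _
    · show P.str ≫ H.map (imgι P.V h.f 0)
        = imgι P.V h.f 0 ≫ inv (imgι P.V h.f 0) ≫ P.str ≫ H.map (imgι P.V h.f 0)
      rw [IsIso.hom_inv_id_assoc]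
      rfl
    · exact Endofunctor.Coalgebra.ext he₀m
  · have hHm : Mono (H.map (imgHom P.V h.f)) := hm _ hm_mono hstrict
    obtain ⟨δ, hδ1, hδ2⟩ := img_llp P.V h.f (H.map (imgHom P.V h.f)) hHm
      (P.str ≫ H.map (imgι P.V h.f 0)) (imgHom P.V h.f ≫ X.str) (by
        have e1 : imgι P.V h.f 0 ≫ imgHom P.V h.f ≫ X.str = h.f ≫ X.str := by
          rw [← Category.assoc, he₀m]
          rfl
        exact e1.trans (h.h.symm.trans ((congrArg (fun z => P.str ≫ H.map z) he₀m.symm).trans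
          ((congrArg (P.str ≫ ·) (H.map_comp _ _)).trans (Category.assoc _ _ _).symm))))
    exact ⟨⟨imgObj P.V h.f, δ⟩, ⟨imgHom P.V h.f, hδ2⟩, ⟨imgι P.V h.f 0, hδ1.symm⟩,
      hIfg, hm_mono, Endofunctor.Coalgebra.ext he₀m⟩

end Image



section Assembly

variable [HasColimits C]
variable [EssentiallySmall.{v} (ObjectProperty.FullSubcategory (fun X : C => LFF.IsFP X))]
variable (H : C ⥤ C) (X : Endofunctor.Coalgebra H)

/-- A subcoalgebra of `X` with finitely generated carrier. -/
structure SubC where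
  T : Endofunctor.Coalgebra H
  m : T ⟶ X
  fg : LFF.IsFG T.V
  mono : Mono m.f

/-- The indexing data for shadows: skeletal fp objects with a morphism to the carrier. -/
abbrev Lam : Type v :=
  Σ s : SmallModel (ObjectProperty.FullSubcategory (fun X : C => LFF.IsFP X)), (objC s ⟶ X.V)

/-- The shadow of a subcoalgebra: the fp-morphisms into the carrier which factor
through it. -/
def Sh (S : SubC H X) : Set (Lam H X) :=
  {p | ∃ w : objC p.1 ⟶ S.T.V, w ≫ S.m.f = p.2}

/-- A carrier morphism into a subcoalgebra compatible with the projections to `X`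
is automatically a coalgebra homomorphism. -/
theorem coalgHom_of_carrier (hm : LFF.PreservesNonemptyMonos H) (S : SubC H X)
    {Q : Endofunctor.Coalgebra H} (q : Q ⟶ X) (φ : Q.V ⟶ S.T.V)
    (hφ : φ ≫ S.m.f = q.f) : Q.str ≫ H.map φ = φ ≫ S.T.str := by
  by_cases hs : LFF.IsStrictInitial S.T.V
  · haveI : IsIso φ := hs.2 _ φ
    have hinitT : IsInitial S.T.V := hs.1.some
    have hinitQ : IsInitial Q.V := hinitT.ofIso (asIso φ).symm
    exact hinitQ.hom_ext _ _
  · haveI hmm2 : Mono (H.map S.m.f) := hm S.m.f S.mono hs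
    rw [← cancel_mono (H.map S.m.f)]
    rw [Category.assoc, ← H.map_comp, hφ, Category.assoc, S.m.h, ← Category.assoc, hφ]
    exact q.h

theorem sub_hom_ext {Q : Endofunctor.Coalgebra H} (S : SubC H X) (φ ψ : Q ⟶ S.T)
    (h : φ ≫ S.m = ψ ≫ S.m) : φ = ψ := by
  haveI := S.mono
  apply Endofunctor.Coalgebra.ext
  have hf := congrArg Endofunctor.Coalgebra.Hom.f h
  simp only [Endofunctor.Coalgebra.comp_f] at hf
  exact (cancel_mono S.m.f).1 hf

/-- Shadow inclusion induces a (unique mono-carried) coalgebra morphism between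
subcoalgebras. -/
theorem sub_le (hC : LFF.IsLFP C) (hm : LFF.PreservesNonemptyMonos H) (S₁ S₂ : SubC H X)
    (hsh : Sh H X S₁ ⊆ Sh H X S₂) :
    ∃ τ : S₁.T ⟶ S₂.T, τ ≫ S₂.m = S₁.m ∧ Mono τ.f := by
  haveI := S₂.mono
  obtain ⟨Γ, _, _, F, c₀, hfp, ⟨hcol⟩, ⟨ρ⟩⟩ := hC.2.2 S₁.T.V
  have hfac : ∀ γ : Γ, ∃ t : F.obj γ ⟶ S₂.T.V,
      t ≫ S₂.m.f = (c₀.ι.app γ ≫ ρ.hom) ≫ S₁.m.f := by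
    intro γ
    obtain ⟨s, ⟨φ⟩⟩ := exists_skel (F.obj γ) (hfp γ)
    have hp : (⟨s, φ.hom ≫ (c₀.ι.app γ ≫ ρ.hom) ≫ S₁.m.f⟩ : Lam H X) ∈ Sh H X S₁ :=
      ⟨φ.hom ≫ c₀.ι.app γ ≫ ρ.hom, by simp [Category.assoc]⟩
    obtain ⟨w, hw⟩ := hsh hp
    refine ⟨φ.inv ≫ w, ?_⟩
    rw [Category.assoc, hw]
    simp
  choose t ht using hfac
  have hnat : ∀ {γ γ' : Γ} (k : γ ⟶ γ'), F.map k ≫ t γ' = t γ := by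
    intro γ γ' k
    rw [← cancel_mono S₂.m.f, Category.assoc, ht, ht]
    simp only [← Category.assoc]
    rw [c₀.w k]
  let d : c₀.pt ⟶ S₂.T.V := hcol.desc ⟨S₂.T.V,
    { app := t
      naturality := fun γ γ' k => by
        simp only [Functor.const_obj_obj, Functor.const_obj_map, Category.comp_id]
        exact hnat k }⟩
  have hd : ∀ γ, c₀.ι.app γ ≫ d = t γ := fun γ => hcol.fac _ γ
  have hτm : (ρ.inv ≫ d) ≫ S₂.m.f = S₁.m.f := by
    rw [← cancel_epi ρ.hom]
    rw [← Category.assoc, ← Category.assoc, Iso.hom_inv_id, Category.id_comp]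
    refine Eq.trans (hcol.hom_ext fun γ => ?_) rfl
    rw [← Category.assoc, hd, ht, Category.assoc]
  have hhom : S₁.T.str ≫ H.map (ρ.inv ≫ d) = (ρ.inv ≫ d) ≫ S₂.T.str :=
    coalgHom_of_carrier H X hm S₂ S₁.m (ρ.inv ≫ d) hτm
  refine ⟨⟨ρ.inv ≫ d, hhom⟩, Endofunctor.Coalgebra.ext hτm, ?_⟩
  haveI : Mono ((ρ.inv ≫ d) ≫ S₂.m.f) := by rw [hτm]; exact S₁.mono
  exact mono_of_mono (ρ.inv ≫ d) S₂.m.f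

/-- The coproduct coalgebra of (the coalgebras underlying) two subcoalgebras. -/
noncomputable def coprodCoalg (S₁ S₂ : SubC H X) : Endofunctor.Coalgebra H where
  V := S₁.T.V ⨿ S₂.T.V
  str := coprod.desc (S₁.T.str ≫ H.map coprod.inl) (S₂.T.str ≫ H.map coprod.inr)

noncomputable def coprodHom (S₁ S₂ : SubC H X) : coprodCoalg H X S₁ S₂ ⟶ X where
  f := coprod.desc S₁.m.f S₂.m.f
  h := by
    simp only [coprodCoalg]
    apply coprod.hom_ext
    · rw [← Category.assoc, ← Category.assoc, coprod.inl_desc, coprod.inl_desc,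
        Category.assoc, ← H.map_comp, coprod.inl_desc, S₁.m.h]
    · rw [← Category.assoc, ← Category.assoc, coprod.inr_desc, coprod.inr_desc,
        Category.assoc, ← H.map_comp, coprod.inr_desc, S₂.m.h]

/-- Any two subcoalgebras admit a common one containing both (shadow-wise). -/
theorem sub_dir (hC : LFF.IsLFP C) (hm : LFF.PreservesNonemptyMonos H) (S₁ S₂ : SubC H X) :
    ∃ S : SubC H X, Sh H X S₁ ⊆ Sh H X S ∧ Sh H X S₂ ⊆ Sh H X S := by
  obtain ⟨T, mT, e, hfg, hmono, hcomm⟩ := image_exists hC H hm X (coprodCoalg H X S₁ S₂)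
    (isFG_coprod S₁.fg S₂.fg) (coprodHom H X S₁ S₂)
  have hcf : e.f ≫ mT.f = coprod.desc S₁.m.f S₂.m.f := by
    have h := congrArg Endofunctor.Coalgebra.Hom.f hcomm
    simp only [Endofunctor.Coalgebra.comp_f] at h
    exact h
  refine ⟨⟨T, mT, hfg, hmono⟩, ?_, ?_⟩
  · rintro p ⟨w, hw⟩
    refine ⟨w ≫ coprod.inl ≫ e.f, ?_⟩
    calc (w ≫ coprod.inl ≫ e.f) ≫ mT.f = w ≫ coprod.inl ≫ e.f ≫ mT.f :=
          (Category.assoc _ _ _).trans (congrArg (w ≫ ·) (Category.assoc _ _ _))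
      _ = w ≫ coprod.inl ≫ coprod.desc S₁.m.f S₂.m.f :=
          congrArg (fun z => w ≫ coprod.inl ≫ z) hcf
      _ = w ≫ S₁.m.f := by rw [coprod.inl_desc]
      _ = p.2 := hw
  · rintro p ⟨w, hw⟩
    refine ⟨w ≫ coprod.inr ≫ e.f, ?_⟩
    calc (w ≫ coprod.inr ≫ e.f) ≫ mT.f = w ≫ coprod.inr ≫ e.f ≫ mT.f :=
          (Category.assoc _ _ _).trans (congrArg (w ≫ ·) (Category.assoc _ _ _))
      _ = w ≫ coprod.inr ≫ coprod.desc S₁.m.f S₂.m.f :=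
          congrArg (fun z => w ≫ coprod.inr ≫ z) hcf
      _ = w ≫ S₂.m.f := by rw [coprod.inr_desc]
      _ = p.2 := hw

theorem sub_nonempty (hC : LFF.IsLFP C) (hm : LFF.PreservesNonemptyMonos H)
    (hX : LFF.IsLFGCoalgebra H X) : Nonempty (SubC H X) := by
  obtain ⟨Γ, _, _, F, c₀, hfp, -, ⟨ρ⟩⟩ := hC.2.2 X.V
  obtain ⟨γ₀⟩ : Nonempty Γ := IsFiltered.nonempty
  obtain ⟨P, h, f', hfg, -⟩ := hX (F.obj γ₀) (isFG_of_isFP (hfp γ₀)) (c₀.ι.app γ₀ ≫ ρ.hom)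
  obtain ⟨T, mT, e, h1, h2, -⟩ := image_exists hC H hm X P hfg h
  exact ⟨⟨T, mT, h1, h2⟩⟩

/-- Every fp-morphism into the carrier of an lfg coalgebra factors through some
fg-carried subcoalgebra. -/
theorem sub_cover (hC : LFF.IsLFP C) (hm : LFF.PreservesNonemptyMonos H)
    (hX : LFF.IsLFGCoalgebra H X) (G : C) (hG : LFF.IsFP G) (g : G ⟶ X.V) :
    ∃ (S : SubC H X) (w : G ⟶ S.T.V), w ≫ S.m.f = g := by
  obtain ⟨P, h, f', hfg, hf⟩ := hX G (isFG_of_isFP hG) g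
  obtain ⟨T, mT, e, h1, h2, h3⟩ := image_exists hC H hm X P hfg h
  refine ⟨⟨T, mT, h1, h2⟩, f' ≫ e.f, ?_⟩
  have h3f : e.f ≫ mT.f = h.f := by
    have hh := congrArg Endofunctor.Coalgebra.Hom.f h3
    simp only [Endofunctor.Coalgebra.comp_f] at hh
    exact hh
  rw [Category.assoc, h3f, hf]

/-- The index poset of shadows of fg-carried subcoalgebras. -/
def JIdx : Type v := {A : Set (Lam H X) // ∃ S : SubC H X, Sh H X S = A}

instance : Preorder (JIdx H X) := Subtype.preorder _

noncomputable def repS (a : JIdx H X) : SubC H X := a.2.choose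

theorem repS_spec (a : JIdx H X) : Sh H X (repS H X a) = a.1 := a.2.choose_spec

variable (hC : LFF.IsLFP C) (hm : LFF.PreservesNonemptyMonos H)

noncomputable def tr {a b : JIdx H X} (g : a ⟶ b) : (repS H X a).T ⟶ (repS H X b).T :=
  (sub_le H X hC hm (repS H X a) (repS H X b)
    (by rw [repS_spec, repS_spec]; exact leOfHom g)).choose

theorem tr_spec {a b : JIdx H X} (g : a ⟶ b) :
    tr H X hC hm g ≫ (repS H X b).m = (repS H X a).m :=
  (sub_le H X hC hm (repS H X a) (repS H X b)
    (by rw [repS_spec, repS_spec]; exact leOfHom g)).choose_spec.1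

theorem tr_mono {a b : JIdx H X} (g : a ⟶ b) : Mono (tr H X hC hm g).f :=
  (sub_le H X hC hm (repS H X a) (repS H X b)
    (by rw [repS_spec, repS_spec]; exact leOfHom g)).choose_spec.2

/-- The diagram of fg-carried subcoalgebras. -/
noncomputable def DFun : JIdx H X ⥤ Endofunctor.Coalgebra H where
  obj a := (repS H X a).T
  map {a b} g := tr H X hC hm g
  map_id a := sub_hom_ext H X _ _ _ (by rw [tr_spec, Category.id_comp])
  map_comp {a b c} g g' := sub_hom_ext H X _ _ _ (by
    rw [tr_spec, Category.assoc, tr_spec, tr_spec])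

/-- The canonical cocone on the diagram of fg-carried subcoalgebras, with point `X`. -/
noncomputable def Dcoc : Cocone (DFun H X hC hm) where
  pt := X
  ι :=
    { app := fun a => (repS H X a).m
      naturality := fun a b g => by
        simp only [Functor.const_obj_obj, Functor.const_obj_map, Category.comp_id]
        exact (tr_spec H X hC hm g).trans (Category.comp_id _).symm }

end Assembly

end LFFProof

open LFF in
/-- Every lfg coalgebra is a directed colimit of its subcoalgebras with finitely
generated carrier: there is a filtered diagram of fg-carried coalgebras with
mono-carried connecting morphisms and mono-carried colimit injections whose colimit
is the given coalgebra. -/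
theorem stmt9 {C : Type u} [Category.{v} C] (hC : IsLFP C)
    (H : C ⥤ C) (hfin : IsFinitary H) (hm : PreservesNonemptyMonos H)
    (X : Endofunctor.Coalgebra H) (hX : IsLFGCoalgebra H X) :
    ∃ (J : Type v) (_ : SmallCategory J) (_ : IsFiltered J)
      (D : J ⥤ Endofunctor.Coalgebra H) (c : Cocone D),
      (∀ j, IsFG (D.obj j).V) ∧
      (∀ ⦃i j : J⦄ (f : i ⟶ j), Mono (D.map f).f) ∧
      (∀ j, Mono (c.ι.app j).f) ∧
      c.pt = X ∧ Nonempty (IsColimit c) := by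
  classical
  haveI := hC.1
  haveI := hC.2.1
  haveI : Nonempty (LFFProof.JIdx H X) := by
    obtain ⟨S⟩ := LFFProof.sub_nonempty H X hC hm hX
    exact ⟨⟨LFFProof.Sh H X S, S, rfl⟩⟩
  haveI : IsDirected (LFFProof.JIdx H X) (· ≤ ·) := by
    constructor
    rintro ⟨A, SA, rfl⟩ ⟨B, SB, rfl⟩
    obtain ⟨S, h1, h2⟩ := LFFProof.sub_dir H X hC hm SA SB
    exact ⟨⟨LFFProof.Sh H X S, S, rfl⟩, h1, h2⟩
  let D := LFFProof.DFun H X hC hm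
  let c : Cocone D := LFFProof.Dcoc H X hC hm
  refine ⟨LFFProof.JIdx H X, inferInstance, inferInstance, D, c, ?_, ?_, ?_, rfl, ?_⟩
  · exact fun a => (LFFProof.repS H X a).fg
  · intro a b g
    exact LFFProof.tr_mono H X hC hm g
  · intro a
    exact (LFFProof.repS H X a).mono
  · -- the colimit property
    let Dc := D ⋙ Endofunctor.Coalgebra.forget H
    let cocX : Cocone Dc :=
      { pt := X.V
        ι :=
          { app := fun a => (LFFProof.repS H X a).m.f
            naturality := fun a b g => by
              simp only [Functor.const_obj_obj, Functor.const_obj_map, Category.comp_id]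
              have h := congrArg Endofunctor.Coalgebra.Hom.f (LFFProof.tr_spec H X hC hm g)
              simp only [Endofunctor.Coalgebra.comp_f] at h
              exact h.trans (Category.comp_id _).symm } }
    let t : colimit Dc ⟶ X.V := colimit.desc Dc cocX
    have hσt : ∀ a, colimit.ι Dc a ≫ t = (LFFProof.repS H X a).m.f :=
      fun a => colimit.ι_desc cocX a
    -- t is a monomorphism
    have step : ∀ {G : C}, IsFP G → ∀ (x y : G ⟶ colimit Dc),
        x ≫ t = y ≫ t → x = y := by
      intro G hG x y hxy
      have mc := (hG (LFFProof.JIdx H X) Dc (colimit.cocone Dc)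
        ⟨colimit.isColimit Dc⟩).some
      obtain ⟨a₁, x₁, hx₁⟩ := LFFProof.map_surj mc x
      obtain ⟨a₂, y₂, hy₂⟩ := LFFProof.map_surj mc y
      obtain ⟨a₃, g₁, g₂, -⟩ := IsFilteredOrEmpty.cocone_objs a₁ a₂
      have hx₃ : (x₁ ≫ Dc.map g₁) ≫ colimit.ι Dc a₃ = x := by
        rw [Category.assoc, colimit.w]
        exact hx₁
      have hy₃ : (y₂ ≫ Dc.map g₂) ≫ colimit.ι Dc a₃ = y := by
        rw [Category.assoc, colimit.w]
        exact hy₂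
      have hm3 : (x₁ ≫ Dc.map g₁) ≫ (LFFProof.repS H X a₃).m.f
          = (y₂ ≫ Dc.map g₂) ≫ (LFFProof.repS H X a₃).m.f := by
        rw [← hσt a₃, ← Category.assoc, ← Category.assoc, hx₃, hy₃]
        exact hxy
      haveI := (LFFProof.repS H X a₃).mono
      have heq : x₁ ≫ Dc.map g₁ = y₂ ≫ Dc.map g₂ := (cancel_mono (LFFProof.repS H X a₃).m.f).1 hm3
      rw [← hx₃, ← hy₃, heq]
    have hmt : Mono t := by
      constructor
      intro Z p q hpq
      exact LFFProof.jointlyEpic hC fun G hG w =>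
        step hG (w ≫ p) (w ≫ q) (by rw [Category.assoc, Category.assoc, hpq])
    -- every fp-morphism into X.V factors through t
    have ffp : ∀ (G : C), IsFP G → ∀ g : G ⟶ X.V,
        ∃ g' : G ⟶ colimit Dc, g' ≫ t = g := by
      intro G hG g
      obtain ⟨S, w, hw⟩ := LFFProof.sub_cover H X hC hm hX G hG g
      have ha : ∃ SS : LFFProof.SubC H X, LFFProof.Sh H X SS = LFFProof.Sh H X S := ⟨S, rfl⟩
      obtain ⟨τ, hτ, -⟩ := LFFProof.sub_le H X hC hm S
        (LFFProof.repS H X ⟨LFFProof.Sh H X S, ha⟩)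
        (LFFProof.repS_spec H X ⟨LFFProof.Sh H X S, ha⟩).symm.subset
      have hτf : τ.f ≫ (LFFProof.repS H X ⟨LFFProof.Sh H X S, ha⟩).m.f = S.m.f := by
        have hh := congrArg Endofunctor.Coalgebra.Hom.f hτ
        simp only [Endofunctor.Coalgebra.comp_f] at hh
        exact hh
      refine ⟨w ≫ τ.f ≫ colimit.ι Dc ⟨LFFProof.Sh H X S, ha⟩, ?_⟩
      exact (Category.assoc _ _ _).trans ((congrArg (w ≫ ·) ((Category.assoc _ _ _).trans
        ((congrArg (τ.f ≫ ·) (hσt _)).trans hτf))).trans hw)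
    -- an inverse for t
    obtain ⟨Γ, _, _, F, c₀, hfp, ⟨hcol⟩, ⟨ρ⟩⟩ := hC.2.2 X.V
    have hv : ∀ γ : Γ, ∃ vg : F.obj γ ⟶ colimit Dc, vg ≫ t = c₀.ι.app γ ≫ ρ.hom :=
      fun γ => ffp _ (hfp γ) _
    choose vg hvg using hv
    have hvnat : ∀ {γ γ' : Γ} (k : γ ⟶ γ'), F.map k ≫ vg γ' = vg γ := by
      intro γ γ' k
      rw [← cancel_mono t, Category.assoc, hvg, hvg, ← Category.assoc, c₀.w k]
    let s : X.V ⟶ colimit Dc := ρ.inv ≫ hcol.desc ⟨colimit Dc,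
      { app := vg
        naturality := fun γ γ' k => by
          simp only [Functor.const_obj_obj, Functor.const_obj_map, Category.comp_id]
          exact hvnat k }⟩
    have hst : s ≫ t = 𝟙 X.V := by
      rw [← cancel_epi ρ.hom]
      show ρ.hom ≫ (ρ.inv ≫ _) ≫ t = ρ.hom ≫ 𝟙 X.V
      rw [Category.comp_id, ← Category.assoc, ← Category.assoc, Iso.hom_inv_id,
        Category.id_comp]
      refine hcol.hom_ext fun γ => ?_
      rw [← Category.assoc, hcol.fac]
      exact hvg γ
    have hts : t ≫ s = 𝟙 (colimit Dc) := by
      rw [← cancel_mono t, Category.assoc, hst, Category.comp_id, Category.id_comp]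
    haveI : IsIso t := ⟨⟨s, hts, hst⟩⟩
    -- build the colimit structure on the cocone `c`
    have mkd : ∀ sc : Cocone D, { d : X ⟶ sc.pt //
        (∀ a, c.ι.app a ≫ d = sc.ι.app a) ∧
        ∀ w : X ⟶ sc.pt, (∀ a, c.ι.app a ≫ w = sc.ι.app a) → w = d } := by
      intro sc
      let cocZ : Cocone Dc :=
        { pt := sc.pt.V
          ι :=
            { app := fun a => (sc.ι.app a).f
              naturality := fun a b g => by
                simp only [Functor.const_obj_obj, Functor.const_obj_map, Category.comp_id]
                have h := congrArg Endofunctor.Coalgebra.Hom.f (sc.ι.naturality g)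
                simp only [Endofunctor.Coalgebra.comp_f] at h
                exact h } }
      let d' : colimit Dc ⟶ sc.pt.V := colimit.desc Dc cocZ
      have hd' : ∀ a, colimit.ι Dc a ≫ d' = (sc.ι.app a).f := fun a => colimit.ι_desc cocZ a
      have hma : ∀ a, (LFFProof.repS H X a).m.f ≫ inv t ≫ d' = (sc.ι.app a).f := by
        intro a
        exact (congrArg (· ≫ inv t ≫ d') (hσt a)).symm.trans ((Category.assoc _ _ _).trans
          ((congrArg (colimit.ι Dc a ≫ ·) (IsIso.hom_inv_id_assoc t d')).trans (hd' a)))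
      have hcoalg : X.str ≫ H.map (inv t ≫ d') = (inv t ≫ d') ≫ sc.pt.str := by
        have hRHS : t ≫ (inv t ≫ d') ≫ sc.pt.str = d' ≫ sc.pt.str := by
          rw [← Category.assoc, ← Category.assoc, IsIso.hom_inv_id, Category.id_comp]
        rw [← cancel_epi t, hRHS]
        refine colimit.hom_ext fun a => ?_
        have hsch : (LFFProof.repS H X a).T.str ≫ H.map (sc.ι.app a).f
            = (sc.ι.app a).f ≫ sc.pt.str := (sc.ι.app a).h
        have e : (LFFProof.repS H X a).m.f ≫ X.str ≫ H.map (inv t ≫ d')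
            = (sc.ι.app a).f ≫ sc.pt.str := by
          rw [← Category.assoc, ← (LFFProof.repS H X a).m.h, Category.assoc, ← H.map_comp,
            hma a, hsch]
        exact (Category.assoc _ _ _).symm.trans ((congrArg (· ≫ X.str ≫ H.map (inv t ≫ d'))
          (hσt a)).trans (e.trans ((congrArg (· ≫ sc.pt.str) (hd' a)).symm.trans
          (Category.assoc _ _ _))))
      refine ⟨⟨inv t ≫ d', hcoalg⟩, fun a => ?_, fun w hw => ?_⟩
      · exact Endofunctor.Coalgebra.ext (hma a)
      · apply Endofunctor.Coalgebra.ext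
        have hcomp : t ≫ w.f = d' := by
          refine colimit.hom_ext fun a => ?_
          have h := congrArg Endofunctor.Coalgebra.Hom.f (hw a)
          have h' : (LFFProof.repS H X a).m.f ≫ w.f = (sc.ι.app a).f := h
          exact (Category.assoc _ _ _).symm.trans ((congrArg (· ≫ w.f) (hσt a)).trans
            (h'.trans (hd' a).symm))
        show w.f = inv t ≫ d'
        rw [← hcomp, IsIso.inv_hom_id_assoc]
    exact ⟨{ desc := fun sc => (mkd sc).1
             fac := fun sc a => (mkd sc).2.1 a
             uniq := fun sc w hw => (mkd sc).2.2 w hw }⟩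
end

section
/- An lfg coalgebra (L, ℓ) is final in the category of lfg coalgebras if and only if for every coalgebra (X, x) with finitely generated carrier there exists a unique coalgebra homomorphism from (X,x) to (L,ℓ). -/
open CategoryTheory CategoryTheory.Limits

universe v u

namespace StmtAux
open LFF

variable {C : Type u} [Category.{v} C]

/-- Abbreviation for the presentation property. -/
def Pres (C : Type u) [Category.{v} C] : Prop :=
  ∀ X : C, ∃ (J : Type v) (_ : SmallCategory J) (_ : IsFiltered J)
    (F : J ⥤ C) (c : Cocone F),
      (∀ j, IsFP (F.obj j)) ∧ Nonempty (IsColimit c) ∧ Nonempty (c.pt ≅ X)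

theorem isFG_of_isFP {A : C} (h : IsFP A) : IsFG A := by
  intro J _ _ F _ c hc
  exact h J F c hc

theorem jointlyEpi (hpres : Pres C) {X W : C} {x y : X ⟶ W}
    (hxy : ∀ (A : C), IsFP A → ∀ t : A ⟶ X, t ≫ x = t ≫ y) : x = y := by
  obtain ⟨J, _, _, F, c, hfp, ⟨hc⟩, ⟨e⟩⟩ := hpres X
  have : e.hom ≫ x = e.hom ≫ y := by
    apply hc.hom_ext
    intro j
    simpa using hxy (F.obj j) (hfp j) (c.ι.app j ≫ e.hom)
  calc x = e.inv ≫ e.hom ≫ x := by simp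
  _ = e.inv ≫ e.hom ≫ y := by rw [this]
  _ = y := by simp

theorem fpFactor {B : C} (hB : IsFP B) {J : Type v} [SmallCategory J] [IsFiltered J]
    {F : J ⥤ C} {c : Cocone F} (hc : IsColimit c) (t : B ⟶ c.pt) :
    ∃ (j : J) (w : B ⟶ F.obj j), w ≫ c.ι.app j = t := by
  obtain ⟨hc'⟩ := hB J F c ⟨hc⟩
  obtain ⟨j, w, hw⟩ := Types.jointly_surjective _ hc' t
  exact ⟨j, w, hw⟩

theorem fpEventual {B : C} (hB : IsFP B) {J : Type v} [SmallCategory J] [IsFiltered J]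
    {F : J ⥤ C} {c : Cocone F} (hc : IsColimit c) {j : J} (x y : B ⟶ F.obj j)
    (h : x ≫ c.ι.app j = y ≫ c.ι.app j) :
    ∃ (k : J) (g : j ⟶ k), x ≫ F.map g = y ≫ F.map g := by
  obtain ⟨hc'⟩ := hB J F c ⟨hc⟩
  have := (Types.FilteredColimit.isColimit_eq_iff _ hc'
    (i := j) (j := j) (xi := x) (xj := y)).1 h
  obtain ⟨k, f, g, hfg⟩ := this
  refine ⟨_, f ≫ IsFiltered.coeqHom f g, ?_⟩
  have hcoeq := IsFiltered.coeq_condition f g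
  have h1 : x ≫ F.map (f ≫ IsFiltered.coeqHom f g)
      = (x ≫ F.map f) ≫ F.map (IsFiltered.coeqHom f g) := by simp
  have h2 : y ≫ F.map (f ≫ IsFiltered.coeqHom f g)
      = (y ≫ F.map g) ≫ F.map (IsFiltered.coeqHom f g) := by
    rw [hcoeq]; simp
  have hfg' : x ≫ F.map f = y ≫ F.map g := hfg
  rw [h1, h2, hfg']

theorem monoLegs (hpres : Pres C) {J : Type v} [SmallCategory J] [IsFiltered J]
    {F : J ⥤ C} (hmono : ∀ ⦃i j : J⦄ (f : i ⟶ j), Mono (F.map f))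
    {c : Cocone F} (hc : IsColimit c) (j : J) : Mono (c.ι.app j) := by
  constructor
  intro B x y hxy
  apply jointlyEpi hpres
  intro A hA t
  have h : (t ≫ x) ≫ c.ι.app j = (t ≫ y) ≫ c.ι.app j := by
    simp only [Category.assoc, hxy]
  obtain ⟨k, g, hg⟩ := fpEventual hA hc (t ≫ x) (t ≫ y) h
  have := hmono g
  rw [← cancel_mono (F.map g)]
  exact hg

theorem fgFactor {B : C} (hB : IsFG B) {J : Type v} [SmallCategory J] [IsFiltered J]
    {F : J ⥤ C} (hmono : ∀ ⦃i j : J⦄ (f : i ⟶ j), Mono (F.map f))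
    {c : Cocone F} (hc : IsColimit c) (t : B ⟶ c.pt) :
    ∃ (j : J) (w : B ⟶ F.obj j), w ≫ c.ι.app j = t := by
  obtain ⟨hc'⟩ := hB J F hmono c ⟨hc⟩
  obtain ⟨j, w, hw⟩ := Types.jointly_surjective _ hc' t
  exact ⟨j, w, hw⟩

theorem isFG_mk (hpres : Pres C) {Z : C}
    (hsurj : ∀ (J : Type v) [SmallCategory J] [IsFiltered J] (F : J ⥤ C),
      (∀ ⦃i j : J⦄ (f : i ⟶ j), Mono (F.map f)) →
      ∀ (c : Cocone F), IsColimit c → ∀ g : Z ⟶ c.pt,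
        ∃ (j : J) (w : Z ⟶ F.obj j), w ≫ c.ι.app j = g) : IsFG Z := by
  intro J _ _ F hmono c hc'
  obtain ⟨hc⟩ := hc'
  constructor
  apply Types.FilteredColimit.isColimitOf
  · intro g
    obtain ⟨j, w, hw⟩ := hsurj J F hmono c hc g
    exact ⟨j, w, hw.symm⟩
  · intro i j xi xj h
    refine ⟨IsFiltered.max i j, IsFiltered.leftToMax i j, IsFiltered.rightToMax i j, ?_⟩
    have h' : xi ≫ c.ι.app i = xj ≫ c.ι.app j := h
    show xi ≫ F.map _ = xj ≫ F.map _
    have hm := monoLegs hpres hmono hc (IsFiltered.max i j)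
    rw [← cancel_mono (c.ι.app (IsFiltered.max i j))]
    simp only [Category.assoc, Cocone.w]
    exact h'

theorem isFG_coprod (hpres : Pres C) [HasColimits C] {P Q : C}
    (hP : IsFG P) (hQ : IsFG Q) : IsFG (P ⨿ Q) := by
  apply isFG_mk hpres
  intro J _ _ F hmono c hc g
  obtain ⟨j₁, w₁, hw₁⟩ := fgFactor hP hmono hc (coprod.inl ≫ g)
  obtain ⟨j₂, w₂, hw₂⟩ := fgFactor hQ hmono hc (coprod.inr ≫ g)
  refine ⟨IsFiltered.max j₁ j₂,
    coprod.desc (w₁ ≫ F.map (IsFiltered.leftToMax j₁ j₂))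
      (w₂ ≫ F.map (IsFiltered.rightToMax j₁ j₂)), ?_⟩
  apply coprod.hom_ext
  · simp only [coprod.inl_desc_assoc, Category.assoc, Cocone.w]
    exact hw₁
  · simp only [coprod.inr_desc_assoc, Category.assoc, Cocone.w]
    exact hw₂


/-- A `Type v` copy of `ℕ` with its poset category structure. -/
structure NatV : Type v where
  down : ℕ

instance : Preorder (NatV.{v}) where
  le a b := a.down ≤ b.down
  le_refl a := Nat.le_refl a.down
  le_trans a b c h h' := Nat.le_trans (show a.down ≤ b.down from h) (show b.down ≤ c.down from h')

instance : Nonempty (NatV.{v}) := ⟨⟨0⟩⟩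
instance : IsDirected (NatV.{v}) (· ≤ ·) :=
  ⟨fun a b => ⟨⟨max a.down b.down⟩, show a.down ≤ max a.down b.down from Nat.le_max_left _ _,
    show b.down ≤ max a.down b.down from Nat.le_max_right _ _⟩⟩

/-- Morphisms in `NatV` from inequalities in `ℕ`. -/
def natVHom {m n : ℕ} (h : m ≤ n) : (⟨m⟩ : NatV.{v}) ⟶ (⟨n⟩ : NatV.{v}) :=
  homOfLE (show ((⟨m⟩ : NatV.{v})).down ≤ ((⟨n⟩ : NatV.{v})).down from h)

/-! ### The quotient chain construction -/


section Chain

variable [HasColimits C] [EssentiallySmall.{v} (ObjectProperty.FullSubcategory (fun X : C => IsFP X))]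

/-- The inclusion of the small model of fp objects. -/
noncomputable def fpι : SmallModel (ObjectProperty.FullSubcategory (fun X : C => IsFP X)) ⥤ C :=
  (equivSmallModel _).inverse ⋙ ObjectProperty.ι _

theorem fpι_isFP (a : SmallModel (ObjectProperty.FullSubcategory (fun X : C => IsFP X))) :
    IsFP ((fpι (C := C)).obj a) :=
  ((equivSmallModel (ObjectProperty.FullSubcategory (fun X : C => IsFP X))).inverse.obj a).property

theorem exists_fpModel_iso {A : C} (hA : IsFP A) :
    ∃ a : SmallModel (ObjectProperty.FullSubcategory (fun X : C => IsFP X)),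
      Nonempty ((fpι (C := C)).obj a ≅ A) := by
  refine ⟨(equivSmallModel _).functor.obj ⟨A, hA⟩, ⟨?_⟩⟩
  exact (ObjectProperty.ι _).mapIso
    (((equivSmallModel (ObjectProperty.FullSubcategory (fun X : C => IsFP X))).unitIso.symm).app ⟨A, hA⟩)

variable {V Xc : C}

/-- Index of parallel pairs from fp objects identified by `fn`. -/
def SIdx (Qn : C) (fn : Qn ⟶ Xc) : Type v :=
  Σ' (a : SmallModel (ObjectProperty.FullSubcategory (fun X : C => IsFP X)))
    (x : (fpι (C := C)).obj a ⟶ Qn) (y : (fpι (C := C)).obj a ⟶ Qn),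
      x ≫ fn = y ≫ fn

noncomputable def kmap₁ (Qn : C) (fn : Qn ⟶ Xc) :
    (∐ fun p : SIdx Qn fn => (fpι (C := C)).obj p.1) ⟶ Qn :=
  Sigma.desc fun p => p.2.1

noncomputable def kmap₂ (Qn : C) (fn : Qn ⟶ Xc) :
    (∐ fun p : SIdx Qn fn => (fpι (C := C)).obj p.1) ⟶ Qn :=
  Sigma.desc fun p => p.2.2.1

noncomputable def stepPair (Qn : C) (fn : Qn ⟶ Xc) : Σ' (Q' : C), Q' ⟶ Xc :=
  ⟨coequalizer (kmap₁ Qn fn) (kmap₂ Qn fn),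
    coequalizer.desc fn (by
      apply Sigma.hom_ext
      intro p
      simp only [kmap₁, kmap₂, colimit.ι_desc_assoc, Cofan.mk_ι_app]
      exact p.2.2.2)⟩

noncomputable def chainSt (f0 : V ⟶ Xc) : ℕ → Σ' (Q' : C), Q' ⟶ Xc
  | 0 => ⟨V, f0⟩
  | n + 1 => stepPair (chainSt f0 n).1 (chainSt f0 n).2

variable (f0 : V ⟶ Xc)

noncomputable def Qob (n : ℕ) : C := (chainSt f0 n).1

noncomputable def fb (n : ℕ) : Qob f0 n ⟶ Xc := (chainSt f0 n).2

theorem Qob_zero : Qob f0 0 = V := rfl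
theorem fb_zero : fb f0 0 = f0 := rfl

theorem Qob_succ (n : ℕ) :
    Qob f0 (n + 1) = coequalizer (kmap₁ (Qob f0 n) (fb f0 n)) (kmap₂ (Qob f0 n) (fb f0 n)) := rfl

noncomputable def qm (n : ℕ) : Qob f0 n ⟶ Qob f0 (n + 1) :=
  coequalizer.π (kmap₁ (Qob f0 n) (fb f0 n)) (kmap₂ (Qob f0 n) (fb f0 n))

instance (n : ℕ) : Epi (qm f0 n) := by
  unfold qm; exact coequalizer.π_epi

theorem qm_fb (n : ℕ) : qm f0 n ≫ fb f0 (n + 1) = fb f0 n :=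
  coequalizer.π_desc _ _

theorem sidx_qm (n : ℕ) (p : SIdx (Qob f0 n) (fb f0 n)) :
    p.2.1 ≫ qm f0 n = p.2.2.1 ≫ qm f0 n := by
  have h := coequalizer.condition (kmap₁ (Qob f0 n) (fb f0 n)) (kmap₂ (Qob f0 n) (fb f0 n))
  have h' := congrArg (fun t => Sigma.ι (fun p : SIdx (Qob f0 n) (fb f0 n) =>
    (fpι (C := C)).obj p.1) p ≫ t) h
  simp [kmap₁, kmap₂] at h'
  exact h'

/-- The chain as a functor over `ULift ℕ`. -/
noncomputable def dnF : NatV.{v} ⥤ ℕ :=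
  Monotone.functor (f := (NatV.down : NatV.{v} → ℕ)) (fun a b h => show a.down ≤ b.down from h)

noncomputable def chainF : NatV.{v} ⥤ C :=
  dnF ⋙ Functor.ofSequence (qm f0)

theorem chainF_obj (n : ℕ) : (chainF f0).obj ⟨n⟩ = Qob f0 n := rfl

theorem chainF_map_succ (n : ℕ) (h : (⟨n⟩ : NatV.{v}) ⟶ (⟨n + 1⟩ : NatV.{v})) :
    (chainF f0).map h = qm f0 n := by
  have h1 : (chainF f0).map h = (Functor.ofSequence (qm f0)).map (dnF.map h) := rfl
  rw [h1]
  have h2 : dnF.map h = homOfLE (Nat.le_add_right n 1) := Subsingleton.elim _ _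
  rw [h2]
  exact Functor.ofSequence_map_homOfLE_succ _ n

theorem chain_nat {W : C} (v : ∀ n, Qob f0 n ⟶ W)
    (hv : ∀ n, qm f0 n ≫ v (n + 1) = v n) {a b : NatV.{v}} (h : a ⟶ b) :
    (chainF f0).map h ≫ v b.down = v a.down := by
  obtain ⟨n⟩ := a
  obtain ⟨k⟩ := b
  have hle : n ≤ k := show (⟨n⟩ : NatV.{v}) ≤ (⟨k⟩ : NatV.{v}) from leOfHom h
  induction k, hle using Nat.le_induction with
  | base =>
    have : h = 𝟙 (⟨n⟩ : NatV.{v}) := Subsingleton.elim _ _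
    rw [this]
    simp
    exact Category.id_comp _
  | succ k hk ih =>
    have hdec : h = natVHom hk ≫ natVHom (Nat.le_succ k) :=
      Subsingleton.elim _ _
    erw [hdec, Functor.map_comp, Category.assoc, chainF_map_succ f0 k, hv k]
    exact ih (natVHom hk)

noncomputable def chainColim : C := colimit (chainF f0)

noncomputable def lg (n : ℕ) : Qob f0 n ⟶ chainColim f0 := colimit.ι (chainF f0) ⟨n⟩

theorem lg_succ (n : ℕ) : qm f0 n ≫ lg f0 (n + 1) = lg f0 n := by
  have := colimit.w (chainF f0) (natVHom (Nat.le_succ n))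
  rw [chainF_map_succ] at this
  exact this

theorem chain_hom_ext {W : C} {x y : chainColim f0 ⟶ W}
    (h : ∀ n, lg f0 n ≫ x = lg f0 n ≫ y) : x = y := by
  apply colimit.hom_ext
  intro a
  exact h a.down

noncomputable def chainDesc {W : C} (v : ∀ n, Qob f0 n ⟶ W)
    (hv : ∀ n, qm f0 n ≫ v (n + 1) = v n) : chainColim f0 ⟶ W :=
  colimit.desc (chainF f0)
    { pt := W
      ι :=
        { app := fun a => v a.down
          naturality := fun a b h => by
            exact (chain_nat f0 v hv h).trans (Category.comp_id _).symm } }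

theorem lg_chainDesc {W : C} (v : ∀ n, Qob f0 n ⟶ W)
    (hv : ∀ n, qm f0 n ≫ v (n + 1) = v n) (n : ℕ) :
    lg f0 n ≫ chainDesc f0 v hv = v n :=
  colimit.ι_desc _ _

noncomputable def fbar : chainColim f0 ⟶ Xc := chainDesc f0 (fb f0) (qm_fb f0)

theorem lg_fbar (n : ℕ) : lg f0 n ≫ fbar f0 = fb f0 n := lg_chainDesc _ _ _ _

section Lift

variable {W T : C}

noncomputable def liftStep (ℓ : W ⟶ T) [Mono ℓ] (g : chainColim f0 ⟶ T) (n : ℕ)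
    (prev : Σ' (vn : Qob f0 n ⟶ W), vn ≫ ℓ = lg f0 n ≫ g) :
    Σ' (vn : Qob f0 (n + 1) ⟶ W), vn ≫ ℓ = lg f0 (n + 1) ≫ g := by
  have hcond : kmap₁ (Qob f0 n) (fb f0 n) ≫ prev.1 = kmap₂ (Qob f0 n) (fb f0 n) ≫ prev.1 := by
    apply Sigma.hom_ext
    intro p
    simp only [kmap₁, kmap₂, colimit.ι_desc_assoc, Cofan.mk_ι_app]
    have hx : p.2.1 ≫ lg f0 n = p.2.2.1 ≫ lg f0 n := by
      rw [← lg_succ f0 n, ← Category.assoc, ← Category.assoc, sidx_qm f0 n p]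
    rw [← cancel_mono ℓ, Category.assoc, Category.assoc, prev.2,
      ← Category.assoc, ← Category.assoc, hx]
  refine ⟨coequalizer.desc prev.1 hcond, ?_⟩
  rw [← cancel_epi (qm f0 n)]
  have h1 : qm f0 n ≫ coequalizer.desc prev.1 hcond = prev.1 := coequalizer.π_desc _ _
  erw [← Category.assoc, h1, prev.2, ← Category.assoc, lg_succ]

noncomputable def liftSeq (ℓ : W ⟶ T) [Mono ℓ] (g : chainColim f0 ⟶ T)
    (v0 : V ⟶ W) (h0 : v0 ≫ ℓ = lg f0 0 ≫ g) :
    ∀ n : ℕ, Σ' (vn : Qob f0 n ⟶ W), vn ≫ ℓ = lg f0 n ≫ g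
  | 0 => ⟨v0, h0⟩
  | n + 1 => liftStep f0 ℓ g n (liftSeq ℓ g v0 h0 n)

theorem liftSeq_succ (ℓ : W ⟶ T) [Mono ℓ] (g : chainColim f0 ⟶ T)
    (v0 : V ⟶ W) (h0 : v0 ≫ ℓ = lg f0 0 ≫ g) (n : ℕ) :
    qm f0 n ≫ (liftSeq f0 ℓ g v0 h0 (n + 1)).1 = (liftSeq f0 ℓ g v0 h0 n).1 :=
  coequalizer.π_desc _ _

theorem chain_lift (ℓ : W ⟶ T) (hℓ : Mono ℓ) (g : chainColim f0 ⟶ T)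
    (v0 : V ⟶ W) (h0 : v0 ≫ ℓ = lg f0 0 ≫ g) :
    ∃ w : chainColim f0 ⟶ W, w ≫ ℓ = g ∧ lg f0 0 ≫ w = v0 := by
  haveI := hℓ
  refine ⟨chainDesc f0 (fun n => (liftSeq f0 ℓ g v0 h0 n).1)
    (liftSeq_succ f0 ℓ g v0 h0), ?_, ?_⟩
  · apply chain_hom_ext
    intro n
    rw [← Category.assoc, lg_chainDesc]
    exact (liftSeq f0 ℓ g v0 h0 n).2
  · exact lg_chainDesc f0 _ _ 0

end Lift

theorem fbar_mono (hpres : Pres C) : Mono (fbar f0) := by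
  have key : ∀ (A : C), IsFP A → ∀ x y : A ⟶ chainColim f0,
      x ≫ fbar f0 = y ≫ fbar f0 → x = y := by
    intro A hA x y hxy
    obtain ⟨j₁, w₁, hw₁⟩ := fpFactor hA (colimit.isColimit (chainF f0)) x
    obtain ⟨j₂, w₂, hw₂⟩ := fpFactor hA (colimit.isColimit (chainF f0)) y
    obtain ⟨n₁⟩ := j₁
    obtain ⟨n₂⟩ := j₂
    obtain ⟨x₁, hx₁def⟩ : ∃ t : A ⟶ Qob f0 (max n₁ n₂),
        t = w₁ ≫ (chainF f0).map (natVHom (Nat.le_max_left n₁ n₂)) := ⟨_, rfl⟩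
    obtain ⟨y₁, hy₁def⟩ : ∃ t : A ⟶ Qob f0 (max n₁ n₂),
        t = w₂ ≫ (chainF f0).map (natVHom (Nat.le_max_right n₁ n₂)) := ⟨_, rfl⟩
    have hx₁ : x₁ ≫ lg f0 (max n₁ n₂) = x := by
      rw [hx₁def]
      show (w₁ ≫ (chainF f0).map (natVHom (Nat.le_max_left n₁ n₂))) ≫
        colimit.ι (chainF f0) ⟨max n₁ n₂⟩ = x
      rw [Category.assoc, colimit.w (chainF f0) (natVHom (Nat.le_max_left n₁ n₂))]
      exact hw₁
    have hy₁ : y₁ ≫ lg f0 (max n₁ n₂) = y := by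
      rw [hy₁def]
      show (w₂ ≫ (chainF f0).map (natVHom (Nat.le_max_right n₁ n₂))) ≫
        colimit.ι (chainF f0) ⟨max n₁ n₂⟩ = y
      rw [Category.assoc, colimit.w (chainF f0) (natVHom (Nat.le_max_right n₁ n₂))]
      exact hw₂
    have hfb : x₁ ≫ fb f0 (max n₁ n₂) = y₁ ≫ fb f0 (max n₁ n₂) := by
      rw [← lg_fbar, ← Category.assoc, ← Category.assoc, hx₁, hy₁, hxy]
    obtain ⟨a, ⟨γ⟩⟩ := exists_fpModel_iso hA
    have hsq := sidx_qm f0 (max n₁ n₂)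
      ⟨a, γ.hom ≫ x₁, γ.hom ≫ y₁, by rw [Category.assoc, Category.assoc, hfb]⟩
    have hq : x₁ ≫ qm f0 (max n₁ n₂) = y₁ ≫ qm f0 (max n₁ n₂) := by
      simp only [Category.assoc] at hsq
      exact (cancel_epi γ.hom).1 hsq
    rw [← hx₁, ← hy₁, ← lg_succ f0 (max n₁ n₂), ← Category.assoc, ← Category.assoc, hq]
  constructor
  intro B x y hxy
  apply jointlyEpi hpres
  intro A hA t
  apply key A hA
  rw [Category.assoc, Category.assoc, hxy]

theorem chainColim_isFG (hpres : Pres C) (hV : IsFG V) : IsFG (chainColim f0) := by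
  apply isFG_mk hpres
  intro J' _ _ F' hmono c' hc' g
  obtain ⟨j, v0, hv0⟩ := fgFactor hV hmono hc' (lg f0 0 ≫ g)
  have hm := monoLegs hpres hmono hc' j
  obtain ⟨w, hw, -⟩ := chain_lift f0 (c'.ι.app j) hm g v0 hv0
  exact ⟨j, w, hw⟩

end Chain
/-! ### Coalgebra constructions -/

section Coalg

open CategoryTheory.Endofunctor

variable (H : C ⥤ C) [HasColimits C]

/-- Binary coproduct of coalgebras. -/
@[reducible]
noncomputable def coalgCoprod (P Q : Coalgebra H) : Coalgebra H where
  V := P.V ⨿ Q.V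
  str := coprod.desc (P.str ≫ H.map coprod.inl) (Q.str ≫ H.map coprod.inr)

noncomputable def coalgInl (P Q : Coalgebra H) : P ⟶ coalgCoprod H P Q where
  f := coprod.inl
  h := (coprod.inl_desc _ _).symm

noncomputable def coalgInr (P Q : Coalgebra H) : Q ⟶ coalgCoprod H P Q where
  f := coprod.inr
  h := (coprod.inr_desc _ _).symm

noncomputable def coalgDesc {P Q X : Coalgebra H} (h : P ⟶ X) (k : Q ⟶ X) :
    coalgCoprod H P Q ⟶ X where
  f := coprod.desc h.f k.f
  h := by
    apply coprod.hom_ext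
    · simp only [coalgCoprod, coprod.desc_comp, coprod.inl_desc_assoc, coprod.inl_desc,
        Category.assoc, ← H.map_comp]
      simp [h.h]
    · simp only [coalgCoprod, coprod.desc_comp, coprod.inr_desc_assoc, coprod.inr_desc,
        Category.assoc, ← H.map_comp]
      simp [k.h]

variable [EssentiallySmall.{v} (ObjectProperty.FullSubcategory (fun X : C => IsFP X))]

/-- Factorisation of a coalgebra morphism with fg domain through a coalgebra
with fg carrier and monomorphic carrier map into the codomain. -/
theorem coalgFactor (hpres : Pres C) (hm : PreservesNonemptyMonos H)
    {R X : Coalgebra H} (m : R ⟶ X) (hR : IsFG R.V) :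
    ∃ (T : Coalgebra H) (e : R ⟶ T) (i : T ⟶ X),
      IsFG T.V ∧ Mono i.f ∧ e.f ≫ i.f = m.f := by
  have monoI : Mono (fbar m.f) := fbar_mono m.f hpres
  have fgI : IsFG (chainColim m.f) := chainColim_isFG m.f hpres hR
  have he0 : lg m.f 0 ≫ fbar m.f = m.f := lg_fbar m.f 0
  rcases Classical.em (IsStrictInitial (chainColim m.f)) with hsi | hsi
  · haveI : IsIso (lg m.f 0) := hsi.2 _ (lg m.f 0)
    refine ⟨⟨chainColim m.f, inv (lg m.f 0) ≫ R.str ≫ H.map (lg m.f 0)⟩,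
      ⟨lg m.f 0, ?_⟩, ⟨fbar m.f, ?_⟩, fgI, monoI, he0⟩
    · exact (IsIso.hom_inv_id_assoc (I := this) _ _).symm
    · show (inv (lg m.f 0) ≫ R.str ≫ H.map (lg m.f 0)) ≫ H.map (fbar m.f)
        = fbar m.f ≫ X.str
      erw [Category.assoc, Category.assoc, ← H.map_comp, he0, m.h]
      have hx : m.f ≫ X.str = lg m.f 0 ≫ fbar m.f ≫ X.str := by
        rw [← Category.assoc, he0]; rfl
      rw [hx]
      simp
  · have hmono : Mono (H.map (fbar m.f)) := hm (fbar m.f) monoI hsi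
    have h0 : (R.str ≫ H.map (lg m.f 0)) ≫ H.map (fbar m.f)
        = lg m.f 0 ≫ (fbar m.f ≫ X.str) := by
      erw [Category.assoc, ← H.map_comp, he0, m.h, ← Category.assoc, he0]; rfl
    obtain ⟨d, hd1, hd2⟩ := chain_lift m.f (H.map (fbar m.f)) hmono
      (fbar m.f ≫ X.str) (R.str ≫ H.map (lg m.f 0)) h0
    refine ⟨⟨chainColim m.f, d⟩, ⟨lg m.f 0, hd2.symm⟩, ⟨fbar m.f, ?_⟩, fgI, monoI, he0⟩
    show d ≫ H.map (fbar m.f) = fbar m.f ≫ X.str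
    exact hd1

/-- The key compatibility lemma. -/
theorem keyLemma (hpres : Pres C) (hm : PreservesNonemptyMonos H)
    {L : Coalgebra H}
    (u : ∀ Y : Coalgebra H, IsFG Y.V → ∃! _ : Y ⟶ L, True)
    {P Q X : Coalgebra H} (hP : IsFG P.V) (hQ : IsFG Q.V)
    (h : P ⟶ X) (k : Q ⟶ X) (vP : P ⟶ L) (vQ : Q ⟶ L)
    {S : C} (a : S ⟶ P.V) (b : S ⟶ Q.V) (hab : a ≫ h.f = b ≫ k.f) :
    a ≫ vP.f = b ≫ vQ.f := by
  have uniq : ∀ (Y : Coalgebra H), IsFG Y.V → ∀ s t : Y ⟶ L, s = t := fun Y hY s t =>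
    ((u Y hY).unique trivial trivial)
  have hfgR : IsFG (coalgCoprod H P Q).V := isFG_coprod hpres hP hQ
  obtain ⟨T, e, i, hfgT, hmono, hei⟩ := coalgFactor H hpres hm (coalgDesc H h k) hfgR
  obtain ⟨uT, -⟩ := (u T hfgT).exists
  have h1 : vP = coalgInl H P Q ≫ e ≫ uT := uniq P hP _ _
  have h2 : vQ = coalgInr H P Q ≫ e ≫ uT := uniq Q hQ _ _
  have hae : (a ≫ coprod.inl) ≫ e.f = (b ≫ coprod.inr) ≫ e.f := by
    rw [← cancel_mono i.f]
    simp only [Category.assoc]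
    rw [hei]
    show a ≫ coprod.inl ≫ (coalgDesc H h k).f = b ≫ coprod.inr ≫ (coalgDesc H h k).f
    simp only [coalgDesc, coprod.inl_desc, coprod.inr_desc]
    exact hab
  rw [h1, h2]
  show a ≫ (coalgInl H P Q).f ≫ e.f ≫ uT.f = b ≫ (coalgInr H P Q).f ≫ e.f ≫ uT.f
  show a ≫ coprod.inl ≫ e.f ≫ uT.f = b ≫ coprod.inr ≫ e.f ≫ uT.f
  simp only [← Category.assoc]
  rw [hae]

end Coalg

end StmtAux

open LFF in
/-- An lfg coalgebra is final among lfg coalgebras iff every coalgebra with finitely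
generated carrier admits a unique homomorphism into it. -/
theorem stmt10 {C : Type u} [Category.{v} C] (hC : IsLFP C)
    (H : C ⥤ C) (hfin : IsFinitary H) (hm : PreservesNonemptyMonos H)
    (L : Endofunctor.Coalgebra H) (hL : IsLFGCoalgebra H L) :
    (∀ X : Endofunctor.Coalgebra H, IsLFGCoalgebra H X → ∃! _ : X ⟶ L, True) ↔
    (∀ X : Endofunctor.Coalgebra H, IsFG X.V → ∃! _ : X ⟶ L, True) := by
  obtain ⟨hcolim, hsmall, hpres'⟩ := hC
  haveI := hcolim
  haveI := hsmall
  have hpres : StmtAux.Pres C := hpres'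
  constructor
  · intro hlhs X hX
    apply hlhs
    intro S hS f
    exact ⟨X, 𝟙 X, f, hX, by simp⟩
  · intro u X hX
    have uniq : ∀ (Y : Endofunctor.Coalgebra H), IsFG Y.V → ∀ s t : Y ⟶ L, s = t :=
      fun Y hY s t => (u Y hY).unique trivial trivial
    obtain ⟨J, _, _, F, c, hfp, ⟨hc⟩, ⟨e⟩⟩ := hpres' X.V
    choose P hP s hcond using fun j : J => hX (F.obj j)
      (StmtAux.isFG_of_isFP (hfp j)) (c.ι.app j ≫ e.hom)
    have hfg : ∀ j, IsFG (P j).V := fun j => (hcond j).1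
    have hfact : ∀ j, s j ≫ (hP j).f = c.ι.app j ≫ e.hom := fun j => (hcond j).2
    have uu : ∀ (Y : Endofunctor.Coalgebra H), IsFG Y.V → (Y ⟶ L) :=
      fun Y hY => (u Y hY).exists.choose
    have compat : ∀ {i j : J} (d : i ⟶ j),
        F.map d ≫ (s j ≫ (uu (P j) (hfg j)).f) = s i ≫ (uu (P i) (hfg i)).f := by
      intro i j d
      have hab : (F.map d ≫ s j) ≫ (hP j).f = s i ≫ (hP i).f := by
        rw [Category.assoc, hfact j, ← Category.assoc, c.w d, ← hfact i]
      have := StmtAux.keyLemma H hpres hm u (hfg j) (hfg i) (hP j) (hP i)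
        (uu (P j) (hfg j)) (uu (P i) (hfg i)) (F.map d ≫ s j) (s i) hab
      rw [← Category.assoc]
      exact this
    let coc : Cocone F :=
      { pt := L.V
        ι :=
          { app := fun j => s j ≫ (uu (P j) (hfg j)).f
            naturality := fun i j d => by
              simp only [Functor.const_obj_obj, Functor.const_obj_map, Category.comp_id]
              exact compat d } }
    obtain ⟨φ, hφ⟩ : ∃ φ : X.V ⟶ L.V,
        φ = e.inv ≫ hc.desc coc := ⟨_, rfl⟩
    have htj : ∀ j, (c.ι.app j ≫ e.hom) ≫ φ = s j ≫ (uu (P j) (hfg j)).f := by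
      intro j
      rw [hφ, Category.assoc, Iso.hom_inv_id_assoc]
      exact hc.fac coc j
    have factor : ∀ (A : C), IsFP A → ∀ t : A ⟶ X.V, ∃ (j : J) (w : A ⟶ F.obj j),
        w ≫ (c.ι.app j ≫ e.hom) = t := by
      intro A hA t
      obtain ⟨j, w, hw⟩ := StmtAux.fpFactor hA hc (t ≫ e.inv)
      refine ⟨j, w, ?_⟩
      rw [← Category.assoc, hw, Category.assoc, Iso.inv_hom_id, Category.comp_id]
    have claim : ∀ (Y : Endofunctor.Coalgebra H) (hY : IsFG Y.V) (h : Y ⟶ X),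
        h.f ≫ φ = (uu Y hY).f := by
      intro Y hY h
      apply StmtAux.jointlyEpi hpres
      intro A hA t0
      obtain ⟨j, w, hw⟩ := factor A hA (t0 ≫ h.f)
      have hab : (w ≫ s j) ≫ (hP j).f = t0 ≫ h.f := by
        rw [Category.assoc, hfact j]
        exact hw
      have hk := StmtAux.keyLemma H hpres hm u (hfg j) hY (hP j) h
        (uu (P j) (hfg j)) (uu Y hY) (w ≫ s j) t0 hab
      calc t0 ≫ h.f ≫ φ = (t0 ≫ h.f) ≫ φ := by rw [Category.assoc]
        _ = (w ≫ (c.ι.app j ≫ e.hom)) ≫ φ := by rw [hw]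
        _ = w ≫ (c.ι.app j ≫ e.hom) ≫ φ := by rw [Category.assoc]
        _ = w ≫ s j ≫ (uu (P j) (hfg j)).f := by rw [htj j]
        _ = (w ≫ s j) ≫ (uu (P j) (hfg j)).f := by rw [Category.assoc]
        _ = t0 ≫ (uu Y hY).f := hk
    have hcondφ : X.str ≫ H.map φ = φ ≫ L.str := by
      apply StmtAux.jointlyEpi hpres
      intro A hA t
      obtain ⟨j, w, hw⟩ := factor A hA t
      have h1 : (hP j).f ≫ φ = (uu (P j) (hfg j)).f := claim _ _ _
      have h2 := (hP j).h
      have h3 := (uu (P j) (hfg j)).h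
      calc t ≫ X.str ≫ H.map φ
          = (w ≫ (c.ι.app j ≫ e.hom)) ≫ X.str ≫ H.map φ := by rw [hw]
        _ = (w ≫ s j ≫ (hP j).f) ≫ X.str ≫ H.map φ := by rw [hfact j]
        _ = w ≫ s j ≫ ((hP j).f ≫ X.str) ≫ H.map φ := by simp only [Category.assoc]
        _ = w ≫ s j ≫ ((P j).str ≫ H.map (hP j).f) ≫ H.map φ := by rw [← h2]
        _ = w ≫ s j ≫ (P j).str ≫ H.map ((hP j).f ≫ φ) := by
            simp only [Category.assoc, H.map_comp]
        _ = w ≫ s j ≫ (P j).str ≫ H.map (uu (P j) (hfg j)).f := by rw [h1]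
        _ = w ≫ s j ≫ (uu (P j) (hfg j)).f ≫ L.str := by rw [h3]
        _ = (w ≫ (s j ≫ (uu (P j) (hfg j)).f)) ≫ L.str := by simp only [Category.assoc]
        _ = (w ≫ (c.ι.app j ≫ e.hom) ≫ φ) ≫ L.str := by rw [htj j]
        _ = ((w ≫ (c.ι.app j ≫ e.hom)) ≫ φ) ≫ L.str := by simp only [Category.assoc]
        _ = t ≫ φ ≫ L.str := by rw [hw, Category.assoc]
    have huniqX : ∀ y z : X ⟶ L, y = z := by
      intro y z
      apply CategoryTheory.Endofunctor.Coalgebra.ext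
      apply StmtAux.jointlyEpi hpres
      intro A hA t
      obtain ⟨j, w, hw⟩ := factor A hA t
      have hyz : hP j ≫ y = hP j ≫ z := uniq (P j) (hfg j) _ _
      have hyz' : (hP j).f ≫ y.f = (hP j).f ≫ z.f := by
        have := congrArg (fun q => CategoryTheory.Endofunctor.Coalgebra.Hom.f q) hyz
        simpa using this
      calc t ≫ y.f = (w ≫ s j ≫ (hP j).f) ≫ y.f := by rw [hfact j, hw]
        _ = w ≫ s j ≫ (hP j).f ≫ y.f := by simp only [Category.assoc]
        _ = w ≫ s j ≫ (hP j).f ≫ z.f := by rw [hyz']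
        _ = (w ≫ s j ≫ (hP j).f) ≫ z.f := by simp only [Category.assoc]
        _ = t ≫ z.f := by rw [hfact j, hw]
    exact ⟨⟨φ, hcondφ⟩, trivial, fun y _ => huniqX y ⟨φ, hcondφ⟩⟩
end

section
/- Lfg coalgebras are closed under quotients: if q : (X,x) ↠ (Y,y) is a coalgebra homomorphism carried by a strong epimorphism and (X,x) is lfg, then (Y,y) is lfg. -/
open CategoryTheory CategoryTheory.Limits

universe v u

open LFF

namespace StmtTwelveAux
open LFF
variable {C : Type u} [Category.{v} C]

structure FPFamily (C : Type u) [Category.{v} C] where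
  ι : Type v
  obj : ι → C
  fp : ∀ i, IsFP (obj i)
  covers : ∀ {M N : C} (m : M ⟶ N),
    (∀ i (a b : obj i ⟶ M), a ≫ m = b ≫ m → a = b) → Mono m

theorem isFG_of_isFP {X : C} (h : IsFP X) : IsFG X :=
  fun J _ _ F _ c hc => h J F c hc

theorem fp_factors {A : C} (hA : IsFP A) {J : Type v} [SmallCategory J] [IsFiltered J]
    (F : J ⥤ C) (c : Cocone F) (hc : IsColimit c) (a : A ⟶ c.pt) :
    ∃ (j : J) (g : A ⟶ F.obj j), g ≫ c.ι.app j = a := by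
  obtain ⟨hc'⟩ := hA J F c ⟨hc⟩
  obtain ⟨j, y, hy⟩ := Types.jointly_surjective_of_isColimit hc' a
  exact ⟨j, y, hy⟩

theorem fg_eventually_eq {A : C} (hA : IsFG A) {J : Type v} [SmallCategory J] [IsFiltered J]
    {F : J ⥤ C} (hmono : ∀ ⦃i j : J⦄ (f : i ⟶ j), Mono (F.map f))
    (c : Cocone F) (hc : IsColimit c) {j : J} (a b : A ⟶ F.obj j)
    (h : a ≫ c.ι.app j = b ≫ c.ι.app j) :
    ∃ (k : J) (f : j ⟶ k), a ≫ F.map f = b ≫ F.map f := by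
  obtain ⟨hc'⟩ := hA J F hmono c ⟨hc⟩
  have h' : ((coyoneda.obj (Opposite.op A)).mapCocone c).ι.app j a =
      ((coyoneda.obj (Opposite.op A)).mapCocone c).ι.app j b := h
  obtain ⟨k, f, g, hfg⟩ := (Types.FilteredColimit.isColimit_eq_iff _ hc').mp h'
  refine ⟨IsFiltered.coeq f g, f ≫ IsFiltered.coeqHom f g, ?_⟩
  have h1 : a ≫ F.map (f ≫ IsFiltered.coeqHom f g)
      = (a ≫ F.map f) ≫ F.map (IsFiltered.coeqHom f g) := by
    rw [F.map_comp]; simp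
  have h2 : b ≫ F.map (f ≫ IsFiltered.coeqHom f g)
      = (b ≫ F.map g) ≫ F.map (IsFiltered.coeqHom f g) := by
    rw [IsFiltered.coeq_condition f g, F.map_comp]; simp
  have hfg' : a ≫ F.map f = b ≫ F.map g := hfg
  rw [h1, h2, hfg']

theorem fp_jointly_epi (hC : IsLFP C) {W Z : C} (u v : W ⟶ Z)
    (h : ∀ (A : C), IsFP A → ∀ a : A ⟶ W, a ≫ u = a ≫ v) : u = v := by
  obtain ⟨J, _, _, F, c, hfp, ⟨hc⟩, ⟨ψ⟩⟩ := hC.2.2 W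
  have : ψ.hom ≫ u = ψ.hom ≫ v := by
    apply hc.hom_ext
    intro j
    have := h (F.obj j) (hfp j) (c.ι.app j ≫ ψ.hom)
    simpa using this
  calc u = ψ.inv ≫ ψ.hom ≫ u := by simp
    _ = ψ.inv ≫ ψ.hom ≫ v := by rw [this]
    _ = v := by simp

theorem mono_of_fp_inj (hC : IsLFP C) {M N : C} (m : M ⟶ N)
    (h : ∀ (A : C), IsFP A → ∀ a b : A ⟶ M, a ≫ m = b ≫ m → a = b) : Mono m := by
  constructor
  intro W u v huv
  apply fp_jointly_epi hC
  intro A hA a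
  exact h A hA (a ≫ u) (a ≫ v) (by simp only [Category.assoc]; rw [huv])

theorem fpFamily_of_isLFP (hC : IsLFP C) : Nonempty (FPFamily C) := by
  have hes : EssentiallySmall.{v} (ObjectProperty.FullSubcategory (fun X : C => IsFP X)) := hC.2.1
  refine ⟨{
    ι := SmallModel (ObjectProperty.FullSubcategory (fun X : C => IsFP X))
    obj := fun s => ((equivSmallModel _).inverse.obj s).obj
    fp := fun s => ((equivSmallModel _).inverse.obj s).property
    covers := ?_ }⟩
  intro M N m hm
  apply mono_of_fp_inj hC
  intro A hA a b hab
  -- transport along the iso between A and its small model representative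
  set E := equivSmallModel (ObjectProperty.FullSubcategory (fun X : C => IsFP X))
  set s := E.functor.obj ⟨A, hA⟩
  have : E.inverse.obj s ≅ (⟨A, hA⟩ : ObjectProperty.FullSubcategory (fun X : C => IsFP X)) :=
    E.unitIso.symm.app _
  have φ : (E.inverse.obj s).obj ≅ A :=
    (ObjectProperty.ι (fun X : C => IsFP X)).mapIso this
  have := hm s (φ.hom ≫ a) (φ.hom ≫ b)
    (by simp only [Category.assoc]; rw [hab])
  calc a = φ.inv ≫ (φ.hom ≫ a) := by simp
    _ = φ.inv ≫ (φ.hom ≫ b) := by rw [this]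
    _ = b := by simp

theorem legs_mono (Φ : FPFamily C) {J : Type v} [SmallCategory J] [IsFiltered J]
    {F : J ⥤ C} (hmono : ∀ ⦃i j : J⦄ (f : i ⟶ j), Mono (F.map f))
    (c : Cocone F) (hc : IsColimit c) (j : J) : Mono (c.ι.app j) := by
  apply Φ.covers
  intro i a b hab
  obtain ⟨k, f, hf⟩ := fg_eventually_eq (isFG_of_isFP (Φ.fp i)) hmono c hc a b hab
  haveI := hmono f
  exact (cancel_mono (F.map f)).mp hf

theorem isFG_of_strongEpi (Φ : FPFamily C) {A B : C} (hA : IsFG A)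
    (e : A ⟶ B) (he : StrongEpi e) : IsFG B := by
  intro J _ _ F hmono c ⟨hc⟩
  obtain ⟨hcA⟩ := hA J F hmono c ⟨hc⟩
  haveI : Epi e := he.epi
  constructor
  apply Types.FilteredColimit.isColimitOf
  · -- joint surjectivity
    intro x
    obtain ⟨j, y, hy⟩ := Types.jointly_surjective_of_isColimit hcA (e ≫ x)
    have hy' : y ≫ c.ι.app j = e ≫ x := hy
    haveI : Mono (c.ι.app j) := legs_mono Φ hmono c hc j
    haveI := he.llp (c.ι.app j)
    have sq : CommSq y e (c.ι.app j) x := ⟨hy'⟩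
    exact ⟨j, sq.lift, sq.fac_right.symm⟩
  · -- eventual equality
    intro i j xi xj hij
    have hij' : xi ≫ c.ι.app i = xj ≫ c.ι.app j := hij
    set k0 := IsFiltered.max i j
    set fi := IsFiltered.leftToMax i j
    set fj := IsFiltered.rightToMax i j
    have h0 : (e ≫ xi ≫ F.map fi) ≫ c.ι.app k0 = (e ≫ xj ≫ F.map fj) ≫ c.ι.app k0 := by
      simp only [Category.assoc, c.w]
      rw [c.w, c.w, hij']
    obtain ⟨k, f, hf⟩ := fg_eventually_eq hA hmono c hc _ _ h0
    refine ⟨k, fi ≫ f, fj ≫ f, ?_⟩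
    have : xi ≫ F.map (fi ≫ f) = xj ≫ F.map (fj ≫ f) := by
      apply (cancel_epi e).mp
      simp only [F.map_comp] at hf ⊢
      simpa only [Category.assoc] using hf
    exact this

theorem isFG_coproduct [HasColimits C] {ι' : Type v} [Finite ι'] (A : ι' → C)
    (hA : ∀ i, IsFG (A i)) : IsFG (∐ A) := by
  classical
  cases nonempty_fintype ι'
  intro J _ _ F hmono c ⟨hc⟩
  constructor
  apply Types.FilteredColimit.isColimitOf
  · -- joint surjectivity
    intro x
    have hx : ∀ i : ι', ∃ (j : J) (g : A i ⟶ F.obj j),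
        g ≫ c.ι.app j = Sigma.ι A i ≫ x := by
      intro i
      obtain ⟨hcA⟩ := hA i J F hmono c ⟨hc⟩
      obtain ⟨j, y, hy⟩ := Types.jointly_surjective_of_isColimit hcA (Sigma.ι A i ≫ x)
      exact ⟨j, y, hy⟩
    choose js gs hgs using hx
    obtain ⟨S, hS⟩ := IsFiltered.sup_objs_exists (Finset.univ.image js)
    have hhom : ∀ i : ι', Nonempty (js i ⟶ S) := by
      intro i
      exact hS (Finset.mem_image_of_mem js (Finset.mem_univ i))
    let fs : ∀ i : ι', js i ⟶ S := fun i => (hhom i).some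
    refine ⟨S, Sigma.desc (fun i => gs i ≫ F.map (fs i)), ?_⟩
    have : (Sigma.desc (fun i => gs i ≫ F.map (fs i))) ≫ c.ι.app S = x := by
      apply Sigma.hom_ext
      intro i
      simp only [colimit.ι_desc_assoc, Cofan.mk_ι_app, Category.assoc, c.w]
      exact hgs i
    exact this.symm
  · -- eventual equality
    intro i j xi xj hij
    have hij' : xi ≫ c.ι.app i = xj ≫ c.ι.app j := hij
    set k0 := IsFiltered.max i j
    set fi := IsFiltered.leftToMax i j
    set fj := IsFiltered.rightToMax i j
    set u := xi ≫ F.map fi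
    set v := xj ≫ F.map fj
    have huv : u ≫ c.ι.app k0 = v ≫ c.ι.app k0 := by
      simp only [u, v, Category.assoc, c.w]
      rw [c.w, c.w]; exact hij'
    -- merge the finitely many components
    have key : ∀ s : Finset ι', ∃ (k : J) (f : k0 ⟶ k),
        ∀ i ∈ s, Sigma.ι A i ≫ u ≫ F.map f = Sigma.ι A i ≫ v ≫ F.map f := by
      intro s
      induction s using Finset.induction with
      | empty => exact ⟨k0, 𝟙 k0, by simp⟩
      | @insert a s ha ih =>
        obtain ⟨k, f, hf⟩ := ih
        have hcomp : (Sigma.ι A a ≫ u ≫ F.map f) ≫ c.ι.app k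
            = (Sigma.ι A a ≫ v ≫ F.map f) ≫ c.ι.app k := by
          simp only [Category.assoc, c.w]
          rw [huv]
        obtain ⟨k', g, hg⟩ := fg_eventually_eq (hA a) hmono c hc _ _ hcomp
        refine ⟨k', f ≫ g, ?_⟩
        intro i hi
        rcases Finset.mem_insert.mp hi with h | h
        · subst h
          simp only [F.map_comp] at hg ⊢
          simpa only [Category.assoc] using hg
        · have := hf i h
          simp only [F.map_comp]
          rw [reassoc_of% this]
    obtain ⟨k, f, hf⟩ := key Finset.univ
    refine ⟨k, fi ≫ f, fj ≫ f, ?_⟩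
    have : xi ≫ F.map (fi ≫ f) = xj ≫ F.map (fj ≫ f) := by
      apply Sigma.hom_ext
      intro i
      have := hf i (Finset.mem_univ i)
      simp only [F.map_comp, u, v, Category.assoc] at this ⊢
      exact this
    exact this

section ChainColimits

def NL : Type v := ULift.{v} ℕ
instance : Preorder NL := inferInstanceAs (Preorder (ULift ℕ))
instance : Nonempty NL := ⟨(ULift.up 0 : ULift ℕ)⟩
instance : IsDirected NL (· ≤ ·) :=
  ⟨fun a b => ⟨(ULift.up (max (ULift.down a) (ULift.down b)) : ULift ℕ),
    (le_max_left (ULift.down a) (ULift.down b) :), (le_max_right (ULift.down a) (ULift.down b) :)⟩⟩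

def NL.up (n : ℕ) : NL := (ULift.up n : ULift ℕ)
def NL.down (x : NL) : ℕ := ULift.down (x : ULift ℕ)

theorem nl_eta (j : NL) : NL.up (NL.down j) = j := rfl

def natDown : NL ⥤ ℕ := Monotone.functor (f := fun x : NL => NL.down x) fun _ _ h => h

/-- The sequence functor reindexed over the `v`-small copy of `ℕ`. -/
def useq {C : Type u} [Category.{v} C] {X : ℕ → C} (f : ∀ n, X n ⟶ X (n + 1)) :
    NL ⥤ C :=
  natDown ⋙ Functor.ofSequence f

theorem useq_map_succ {C : Type u} [Category.{v} C] {X : ℕ → C} (f : ∀ n, X n ⟶ X (n + 1))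
    (n : ℕ) (φ : NL.up n ⟶ NL.up (n + 1)) : (useq f).map φ = f n := by
  show (Functor.ofSequence f).map (natDown.map φ) = f n
  rw [Subsingleton.elim (natDown.map φ) (homOfLE (n.le_add_right 1))]
  exact Functor.ofSequence_map_homOfLE_succ f n

variable {C : Type u} [Category.{v} C]

theorem strongEpi_chain_leg [HasColimits C] (X : ℕ → C) (f : ∀ n, X n ⟶ X (n + 1))
    (hf : ∀ n, StrongEpi (f n)) :
    StrongEpi (colimit.ι (useq f) (NL.up 0)) := by
  set F := useq f with hF
  have hw : ∀ n : ℕ, f n ≫ colimit.ι F (NL.up (n + 1)) = colimit.ι F (NL.up n) := by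
    intro n
    rw [← useq_map_succ f n (homOfLE (show NL.up n ≤ NL.up (n + 1) from Nat.le_succ n))]
    exact colimit.w F _
  constructor
  · constructor
    intro W g₁ g₂ h0
    apply colimit.hom_ext
    intro j
    rw [← nl_eta j]
    generalize NL.down j = n
    induction n with
    | zero => exact h0
    | succ n ih =>
      haveI := (hf n).epi
      apply (cancel_epi (f n)).mp
      exact (Category.assoc _ _ _).symm.trans ((eq_whisker (hw n) g₁).trans (ih.trans ((eq_whisker (hw n) g₂).symm.trans (Category.assoc _ _ _))))
  · intro W₁ W₂ z hz
    constructor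
    intro u v sq
    have hwv : ∀ (n : ℕ) (dn : X n ⟶ W₁), dn ≫ z = colimit.ι F (NL.up n) ≫ v →
        dn ≫ z = f n ≫ colimit.ι F (NL.up (n + 1)) ≫ v := by
      intro n dn h
      rw [h]; exact (eq_whisker (hw n) v).symm.trans (Category.assoc _ _ _)
    let step : ∀ n, {dn : X n ⟶ W₁ // dn ≫ z = colimit.ι F (NL.up n) ≫ v} →
        {dn : X (n + 1) ⟶ W₁ // dn ≫ z = colimit.ι F (NL.up (n + 1)) ≫ v} := fun n prev =>
      haveI := (hf n).llp z
      letI sqn : CommSq prev.1 (f n) z (colimit.ι F (NL.up (n + 1)) ≫ v) := ⟨hwv n prev.1 prev.2⟩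
      ⟨sqn.lift, sqn.fac_right⟩
    let d : ∀ n, {dn : X n ⟶ W₁ // dn ≫ z = colimit.ι F (NL.up n) ≫ v} :=
      fun n => Nat.rec ⟨u, sq.w⟩ step n
    have hcompat : ∀ n, f n ≫ (d (n + 1)).1 = (d n).1 := by
      intro n
      haveI := (hf n).llp z
      exact (⟨hwv n (d n).1 (d n).2⟩ :
        CommSq (d n).1 (f n) z (colimit.ι F (NL.up (n + 1)) ≫ v)).fac_left
    let cocN : Cocone (Functor.ofSequence f) := ⟨W₁,
      NatTrans.ofSequence (F := Functor.ofSequence f) (G := (Functor.const ℕ).obj W₁)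
      (fun n => (d n).1) (by
        intro n
        show (Functor.ofSequence f).map (homOfLE (n.le_add_right 1)) ≫ (d (n + 1)).1
          = (d n).1 ≫ 𝟙 W₁
        rw [Category.comp_id, Functor.ofSequence_map_homOfLE_succ f n]
        exact hcompat n)⟩
    let coc : Cocone F := cocN.whisker natDown
    let δ : colimit F ⟶ W₁ := colimit.desc F coc
    have hδ : ∀ n : ℕ, colimit.ι F (NL.up n) ≫ δ = (d n).1 :=
      fun n => colimit.ι_desc coc (NL.up n)
    refine ⟨⟨⟨δ, hδ 0, ?_⟩⟩⟩
    apply colimit.hom_ext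
    intro j
    rw [← nl_eta j]
    rw [reassoc_of% (hδ (NL.down j))]; exact (d (NL.down j)).2

end ChainColimits

section ImageConstruction

variable {C : Type u} [Category.{v} C] [HasColimits C] (Φ : FPFamily C)

/-- Index of all pairs of maps from the test family merged by `kk`. -/
def relIndex (V Z : C) (kk : V ⟶ Z) : Type v :=
  Σ i : Φ.ι, {q : (Φ.obj i ⟶ V) × (Φ.obj i ⟶ V) // q.1 ≫ kk = q.2 ≫ kk}

noncomputable def relU1 (V Z : C) (kk : V ⟶ Z) :
    (∐ fun r : relIndex Φ V Z kk => Φ.obj r.1) ⟶ V :=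
  Sigma.desc fun r => r.2.1.1

noncomputable def relU2 (V Z : C) (kk : V ⟶ Z) :
    (∐ fun r : relIndex Φ V Z kk => Φ.obj r.1) ⟶ V :=
  Sigma.desc fun r => r.2.1.2

theorem relU_w (V Z : C) (kk : V ⟶ Z) :
    relU1 Φ V Z kk ≫ kk = relU2 Φ V Z kk ≫ kk := by
  apply Sigma.hom_ext
  intro r
  simp only [relU1, relU2, colimit.ι_desc_assoc, Cofan.mk_ι_app]
  exact r.2.2

noncomputable def stepObj (V Z : C) (kk : V ⟶ Z) : C :=
  coequalizer (relU1 Φ V Z kk) (relU2 Φ V Z kk)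

noncomputable def stepπ (V Z : C) (kk : V ⟶ Z) : V ⟶ stepObj Φ V Z kk :=
  coequalizer.π _ _

noncomputable def stepMap (V Z : C) (kk : V ⟶ Z) : stepObj Φ V Z kk ⟶ Z :=
  coequalizer.desc kk (relU_w Φ V Z kk)

theorem stepπ_desc (V Z : C) (kk : V ⟶ Z) :
    stepπ Φ V Z kk ≫ stepMap Φ V Z kk = kk :=
  coequalizer.π_desc _ _

instance stepπ_strongEpi (V Z : C) (kk : V ⟶ Z) : StrongEpi (stepπ Φ V Z kk) := by
  unfold stepπ
  exact @strongEpi_of_effectiveEpi C _ _ _ _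
    (RegularEpi.effectiveEpi (coequalizerRegular (relU1 Φ V Z kk) (relU2 Φ V Z kk)))

theorem step_merges (V Z : C) (kk : V ⟶ Z) (i : Φ.ι) (a b : Φ.obj i ⟶ V)
    (h : a ≫ kk = b ≫ kk) : a ≫ stepπ Φ V Z kk = b ≫ stepπ Φ V Z kk := by
  have h1 : Sigma.ι (fun r : relIndex Φ V Z kk => Φ.obj r.1) ⟨i, (a, b), h⟩ ≫ relU1 Φ V Z kk
      = a := by simp [relU1]
  have h2 : Sigma.ι (fun r : relIndex Φ V Z kk => Φ.obj r.1) ⟨i, (a, b), h⟩ ≫ relU2 Φ V Z kk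
      = b := by simp [relU2]
  have hcond : relU1 Φ V Z kk ≫ stepπ Φ V Z kk = relU2 Φ V Z kk ≫ stepπ Φ V Z kk :=
    coequalizer.condition _ _
  calc a ≫ stepπ Φ V Z kk
      = Sigma.ι _ (⟨i, (a, b), h⟩ : relIndex Φ V Z kk) ≫ relU1 Φ V Z kk ≫ stepπ Φ V Z kk := by
        erw [← Category.assoc, h1]
    _ = Sigma.ι _ (⟨i, (a, b), h⟩ : relIndex Φ V Z kk) ≫ relU2 Φ V Z kk ≫ stepπ Φ V Z kk := by
        erw [hcond]; rfl
    _ = b ≫ stepπ Φ V Z kk := by erw [← Category.assoc, h2]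

noncomputable def chain (A Z : C) (k : A ⟶ Z) : ℕ → Σ' (V : C), V ⟶ Z :=
  fun n => Nat.rec ⟨A, k⟩ (fun _ p => ⟨stepObj Φ p.1 Z p.2, stepMap Φ p.1 Z p.2⟩) n

noncomputable def chainHom (A Z : C) (k : A ⟶ Z) (n : ℕ) :
    (chain Φ A Z k n).1 ⟶ (chain Φ A Z k (n + 1)).1 :=
  stepπ Φ (chain Φ A Z k n).1 Z (chain Φ A Z k n).2

theorem chainHom_desc (A Z : C) (k : A ⟶ Z) (n : ℕ) :
    chainHom Φ A Z k n ≫ (chain Φ A Z k (n + 1)).2 = (chain Φ A Z k n).2 :=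
  stepπ_desc Φ _ Z _

include Φ in
theorem exists_image {A Z : C} (k : A ⟶ Z) (hA : IsFG A) :
    ∃ (Q : C) (e : A ⟶ Q) (m : Q ⟶ Z),
      StrongEpi e ∧ Mono m ∧ IsFG Q ∧ e ≫ m = k := by
  set F := useq (chainHom Φ A Z k) with hF
  have hw : ∀ n : ℕ, chainHom Φ A Z k n ≫ colimit.ι F (NL.up (n + 1)) = colimit.ι F (NL.up n) := by
    intro n
    rw [← useq_map_succ (chainHom Φ A Z k) n (homOfLE (show NL.up n ≤ NL.up (n + 1) from Nat.le_succ n))]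
    exact colimit.w F _
  set Q := colimit F with hQ
  set e : A ⟶ Q := colimit.ι F (NL.up 0) with he
  set cocN : Cocone (Functor.ofSequence (chainHom Φ A Z k)) := ⟨Z,
    NatTrans.ofSequence (F := Functor.ofSequence (chainHom Φ A Z k))
      (G := (Functor.const ℕ).obj Z)
      (fun n => (chain Φ A Z k n).2) (by
        intro n
        show (Functor.ofSequence (chainHom Φ A Z k)).map (homOfLE (n.le_add_right 1)) ≫
            (chain Φ A Z k (n + 1)).2 = (chain Φ A Z k n).2 ≫ 𝟙 Z
        rw [Category.comp_id, Functor.ofSequence_map_homOfLE_succ (chainHom Φ A Z k) n]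
        exact chainHom_desc Φ A Z k n)⟩ with hcocN
  set coc : Cocone F := cocN.whisker natDown with hcoc
  set m : Q ⟶ Z := colimit.desc F coc with hm
  have hι : ∀ n : ℕ, colimit.ι F (NL.up n) ≫ m = (chain Φ A Z k n).2 :=
    fun n => colimit.ι_desc coc (NL.up n)
  have hse : StrongEpi e :=
    strongEpi_chain_leg (fun n => (chain Φ A Z k n).1) (chainHom Φ A Z k)
      (fun n => stepπ_strongEpi Φ _ Z _)
  refine ⟨Q, e, m, hse, ?_, isFG_of_strongEpi Φ hA e hse, hι 0⟩
  -- m is mono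
  apply Φ.covers
  intro i a b hab
  obtain ⟨j₁, a₀, ha₀⟩ := fp_factors (Φ.fp i) (J := NL) F
    (colimit.cocone F) (colimit.isColimit F) a
  obtain ⟨j₂, b₀, hb₀⟩ := fp_factors (Φ.fp i) (J := NL) F
    (colimit.cocone F) (colimit.isColimit F) b
  set n₁ := NL.down j₁ with hn₁
  set n₂ := NL.down j₂ with hn₂
  set n := max n₁ n₂ with hn
  set a₁ : Φ.obj i ⟶ F.obj (NL.up n) :=
    a₀ ≫ F.map (homOfLE (show j₁ ≤ NL.up n from le_max_left n₁ n₂)) with ha₁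
  set b₁ : Φ.obj i ⟶ F.obj (NL.up n) :=
    b₀ ≫ F.map (homOfLE (show j₂ ≤ NL.up n from le_max_right n₁ n₂)) with hb₁
  have ha : a₁ ≫ colimit.ι F (NL.up n) = a := by
    rw [ha₁, Category.assoc, colimit.w]
    exact ha₀
  have hb : b₁ ≫ colimit.ι F (NL.up n) = b := by
    rw [hb₁, Category.assoc, colimit.w]
    exact hb₀
  have hmerge : a₁ ≫ (chain Φ A Z k n).2 = b₁ ≫ (chain Φ A Z k n).2 := by
    rw [← hι n, ← Category.assoc, ← Category.assoc, ha, hb]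
    exact hab
  have hstep : a₁ ≫ chainHom Φ A Z k n = b₁ ≫ chainHom Φ A Z k n :=
    step_merges Φ (chain Φ A Z k n).1 Z (chain Φ A Z k n).2 i a₁ b₁ hmerge
  calc a = a₁ ≫ colimit.ι F (NL.up n) := ha.symm
    _ = a₁ ≫ chainHom Φ A Z k n ≫ colimit.ι F (NL.up (n + 1)) := by erw [hw n]
    _ = b₁ ≫ chainHom Φ A Z k n ≫ colimit.ι F (NL.up (n + 1)) := by
        erw [← Category.assoc, hstep, Category.assoc]
    _ = b₁ ≫ colimit.ι F (NL.up n) := by erw [hw n]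
    _ = b := hb

end ImageConstruction

end StmtTwelveAux

open StmtTwelveAux in
/-- Lfg coalgebras are closed under strong-epi-carried quotients. -/
theorem stmt12 {C : Type u} [Category.{v} C] (hC : IsLFP C)
    (H : C ⥤ C) (hfin : IsFinitary H) (hm : PreservesNonemptyMonos H)
    (X Y : Endofunctor.Coalgebra H) (q : X ⟶ Y) (hq : StrongEpi q.f)
    (hX : IsLFGCoalgebra H X) : IsLFGCoalgebra H Y := by
  classical
  haveI : HasColimits C := hC.1
  obtain ⟨Φ⟩ := fpFamily_of_isLFP hC
  intro S hS f
  -- a filtered presentation of the carrier of X by fp objects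
  obtain ⟨J, _instJ, _instFJ, F, c, hfp, ⟨hc⟩, ⟨ψ⟩⟩ := hC.2.2 X.V
  -- factor each leg through a coalgebra with fg carrier
  have hleg : ∀ j : J, ∃ (P : Endofunctor.Coalgebra H) (h : P ⟶ X) (f' : F.obj j ⟶ P.V),
      IsFG P.V ∧ f' ≫ h.f = c.ι.app j ≫ ψ.hom :=
    fun j => hX (F.obj j) (isFG_of_isFP (hfp j)) (c.ι.app j ≫ ψ.hom)
  choose P hP fleg hprop using hleg
  have hPfg : ∀ j, IsFG (P j).V := fun j => (hprop j).1
  have hfac : ∀ j, fleg j ≫ (hP j).f = c.ι.app j ≫ ψ.hom := fun j => (hprop j).2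
  -- coproduct coalgebras indexed by finite sets of legs
  let PV : Finset J → C := fun T => ∐ (fun i : ↑T => (P i.1).V)
  let str : ∀ T, PV T ⟶ H.obj (PV T) := fun T =>
    Sigma.desc (fun i : ↑T => (P i.1).str ≫ H.map (Sigma.ι (fun i : ↑T => (P i.1).V) i))
  let kT : ∀ T, PV T ⟶ Y.V := fun T => Sigma.desc (fun i : ↑T => (hP i.1).f ≫ q.f)
  have hkT : ∀ T, str T ≫ H.map (kT T) = kT T ≫ Y.str := by
    intro T
    apply Sigma.hom_ext
    intro i
    have h1 : Sigma.ι (fun i : ↑T => (P i.1).V) i ≫ str T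
        = (P i.1).str ≫ H.map (Sigma.ι (fun i : ↑T => (P i.1).V) i) := by
      simp [str]
    have h2 : Sigma.ι (fun i : ↑T => (P i.1).V) i ≫ kT T = (hP i.1).f ≫ q.f := by
      simp [kT]
    rw [← Category.assoc, h1, Category.assoc, ← H.map_comp, h2, ← Category.assoc, h2]
    have := (hP i.1).h
    have hqh := q.h
    calc (P i.1).str ≫ H.map ((hP i.1).f ≫ q.f)
        = (P i.1).str ≫ H.map (hP i.1).f ≫ H.map q.f := by rw [H.map_comp]
      _ = ((hP i.1).f ≫ X.str) ≫ H.map q.f := by rw [← Category.assoc, this]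
      _ = (hP i.1).f ≫ (X.str ≫ H.map q.f) := by rw [Category.assoc]
      _ = (hP i.1).f ≫ q.f ≫ Y.str := by rw [hqh]
      _ = ((hP i.1).f ≫ q.f) ≫ Y.str := by rw [Category.assoc]
  have hPVfg : ∀ T, IsFG (PV T) := fun T => isFG_coproduct _ (fun i => hPfg i.1)
  -- images
  have himg : ∀ T : Finset J, ∃ (Q : C) (e : PV T ⟶ Q) (m : Q ⟶ Y.V),
      StrongEpi e ∧ Mono m ∧ IsFG Q ∧ e ≫ m = kT T :=
    fun T => exists_image Φ (kT T) (hPVfg T)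
  choose QT eT mT hQe hQm hQfg hQfac using himg
  -- connecting maps between the coproducts
  let ρ : ∀ (T T' : Finset J), T ⊆ T' → (PV T ⟶ PV T') := fun T T' hsub =>
    Sigma.desc (fun i : ↑T => Sigma.ι (fun i : ↑T' => (P i.1).V) ⟨i.1, hsub i.2⟩)
  have hρk : ∀ (T T') (hsub : T ⊆ T'), ρ T T' hsub ≫ kT T' = kT T := by
    intro T T' hsub
    apply Sigma.hom_ext
    intro i
    simp [ρ, kT]
  -- connecting maps between the images
  have hdex : ∀ (T T') (hsub : T ⊆ T'), ∃ d : QT T ⟶ QT T',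
      eT T ≫ d = ρ T T' hsub ≫ eT T' ∧ d ≫ mT T' = mT T := by
    intro T T' hsub
    haveI := hQm T'
    haveI := (hQe T).llp (mT T')
    have sq : CommSq (ρ T T' hsub ≫ eT T') (eT T) (mT T') (mT T) := by
      constructor
      rw [Category.assoc, hQfac, hρk, ← hQfac]
    exact ⟨sq.lift, sq.fac_left, sq.fac_right⟩
  choose d hd1 hd2 using hdex
  -- the filtered diagram of images
  let G : Finset J ⥤ C := {
    obj := QT
    map := fun {T T'} φ => d T T' (leOfHom φ)
    map_id := by
      intro T
      haveI := hQm T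
      apply (cancel_mono (mT T)).mp
      rw [hd2, Category.id_comp]
    map_comp := by
      intro T T' T'' φ φ'
      haveI := hQm T''
      apply (cancel_mono (mT T'')).mp
      rw [hd2, Category.assoc, hd2, hd2] }
  have hGmono : ∀ ⦃T T' : Finset J⦄ (φ : T ⟶ T'), Mono (G.map φ) := by
    intro T T' φ
    have : G.map φ ≫ mT T' = mT T := hd2 T T' (leOfHom φ)
    have hm2 : Mono (G.map φ ≫ mT T') := by rw [this]; exact hQm T
    exact mono_of_mono _ (mT T')
  -- the cocone over the images with point Y.V
  let cY : Cocone G := {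
    pt := Y.V
    ι := {
      app := fun T => mT T
      naturality := by
        intro T T' φ
        have : G.map φ ≫ mT T' = mT T := hd2 T T' (leOfHom φ)
        simpa using this } }
  -- the comparison map
  let n : colimit G ⟶ Y.V := colimit.desc G cY
  have hn : ∀ T, colimit.ι G T ≫ n = mT T := fun T => colimit.ι_desc cY T
  -- n is mono
  have hnmono : Mono n := by
    apply Φ.covers
    intro i a b hab
    obtain ⟨T₁, a₀, ha₀⟩ := fp_factors (Φ.fp i) (J := Finset J) G
      (colimit.cocone G) (colimit.isColimit G) a
    obtain ⟨T₂, b₀, hb₀⟩ := fp_factors (Φ.fp i) (J := Finset J) G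
      (colimit.cocone G) (colimit.isColimit G) b
    set T := T₁ ⊔ T₂ with hT
    set a₁ := a₀ ≫ G.map (homOfLE (le_sup_left : T₁ ≤ T)) with ha₁
    set b₁ := b₀ ≫ G.map (homOfLE (le_sup_right : T₂ ≤ T)) with hb₁
    have ha : a₁ ≫ colimit.ι G T = a := by
      rw [ha₁, Category.assoc, colimit.w]
      exact ha₀
    have hb : b₁ ≫ colimit.ι G T = b := by
      rw [hb₁, Category.assoc, colimit.w]
      exact hb₀
    haveI := hQm T
    have : a₁ ≫ mT T = b₁ ≫ mT T := by
      rw [← hn T, ← Category.assoc, ← Category.assoc, ha, hb]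
      exact hab
    have heq : a₁ = b₁ := (cancel_mono (mT T)).mp this
    rw [← ha, ← hb, heq]
  -- the comparison map from the carrier of X
  let t : ∀ j : J, F.obj j ⟶ colimit G := fun j =>
    fleg j ≫ Sigma.ι (fun i : ↑({j} : Finset J) => (P i.1).V) ⟨j, Finset.mem_singleton_self j⟩ ≫
      eT {j} ≫ colimit.ι G {j}
  have htn : ∀ j : J, t j ≫ n = c.ι.app j ≫ ψ.hom ≫ q.f := by
    intro j
    have h2 : Sigma.ι (fun i : ↑({j} : Finset J) => (P i.1).V)
        ⟨j, Finset.mem_singleton_self j⟩ ≫ kT {j} = (hP j).f ≫ q.f := by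
      simp [kT]
    calc t j ≫ n
        = fleg j ≫ Sigma.ι (fun i : ↑({j} : Finset J) => (P i.1).V)
            ⟨j, Finset.mem_singleton_self j⟩ ≫ eT {j} ≫ mT {j} := by
          simp only [t, Category.assoc, hn]
      _ = fleg j ≫ Sigma.ι (fun i : ↑({j} : Finset J) => (P i.1).V)
            ⟨j, Finset.mem_singleton_self j⟩ ≫ kT {j} := by rw [hQfac]
      _ = fleg j ≫ (hP j).f ≫ q.f := by rw [h2]
      _ = (fleg j ≫ (hP j).f) ≫ q.f := by rw [Category.assoc]
      _ = (c.ι.app j ≫ ψ.hom) ≫ q.f := by rw [hfac]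
      _ = c.ι.app j ≫ ψ.hom ≫ q.f := by rw [Category.assoc]
  have htnat : ∀ (j j' : J) (φ : j ⟶ j'), F.map φ ≫ t j' = t j := by
    intro j j' φ
    haveI := hnmono
    apply (cancel_mono n).mp
    rw [Category.assoc, htn, htn]
    have := c.w φ
    rw [← Category.assoc, ← Category.assoc, this, Category.assoc]
  let tc : Cocone F := {
    pt := colimit G
    ι := {
      app := t
      naturality := by
        intro j j' φ
        simpa using htnat j j' φ } }
  let rr : c.pt ⟶ colimit G := hc.desc tc
  have hrr : ∀ j, c.ι.app j ≫ rr = t j := fun j => hc.fac tc j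
  have hr : (ψ.inv ≫ rr) ≫ n = q.f := by
    have h1 : rr ≫ n = ψ.hom ≫ q.f := by
      apply hc.hom_ext
      intro j
      rw [← Category.assoc, hrr, htn, ← Category.assoc]
    rw [Category.assoc, h1, ← Category.assoc, Iso.inv_hom_id, Category.id_comp]
  -- n is an iso
  haveI := hnmono
  haveI := hq.llp n
  have sqn : CommSq (ψ.inv ≫ rr) q.f n (𝟙 Y.V) := by
    constructor
    rw [Category.comp_id, hr]
  have hl1 : q.f ≫ sqn.lift = ψ.inv ≫ rr := sqn.fac_left
  have hl2 : sqn.lift ≫ n = 𝟙 Y.V := sqn.fac_right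
  haveI hniso : IsIso n := by
    refine ⟨sqn.lift, ?_, hl2⟩
    have hcomp : (n ≫ sqn.lift) ≫ n = 𝟙 _ ≫ n := by
      rw [Category.assoc, hl2, Category.comp_id, Category.id_comp]
    exact (cancel_mono n).mp hcomp
  -- the cocone cY is a colimit
  have hcY : IsColimit cY :=
    IsColimit.ofIsoColimit (colimit.isColimit G)
      (Cocones.ext (asIso n) (fun T => hn T))
  -- apply finite generation of S
  obtain ⟨hcS⟩ := hS (Finset J) G hGmono cY ⟨hcY⟩
  obtain ⟨T, g, hg⟩ := Types.jointly_surjective_of_isColimit hcS f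
  have hg' : g ≫ mT T = f := hg
  -- build the coalgebra structure on the image
  have hdstr : ∃ dstr : QT T ⟶ H.obj (QT T), dstr ≫ H.map (mT T) = mT T ≫ Y.str := by
    by_cases hsi : IsStrictInitial (QT T)
    · haveI : IsIso (eT T) := hsi.2 _ (eT T)
      refine ⟨inv (eT T) ≫ str T ≫ H.map (eT T), ?_⟩
      have hik : inv (eT T) ≫ kT T = mT T := by
        rw [← hQfac T, ← Category.assoc, IsIso.inv_hom_id, Category.id_comp]
      rw [Category.assoc, Category.assoc, ← H.map_comp, hQfac, hkT, ← Category.assoc, hik]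
    · haveI := hm (mT T) (hQm T) hsi
      haveI := (hQe T).llp (H.map (mT T))
      have sq2 : CommSq (str T ≫ H.map (eT T)) (eT T) (H.map (mT T)) (mT T ≫ Y.str) := by
        constructor
        rw [Category.assoc, ← H.map_comp, hQfac, hkT, ← Category.assoc, hQfac]
      exact ⟨sq2.lift, sq2.fac_right⟩
  obtain ⟨dstr, hdstr⟩ := hdstr
  exact ⟨⟨QT T, dstr⟩, ⟨mT T, hdstr⟩, g, hQfg T, hg'⟩
end
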